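/- arXiv:1901.01127 — 5 statements merged into one kernel-verified Lean document; each statement's English description precedes it below -/
import Mathlib

section
/- Let d > 1 be a real number and let (a_n) = (b_n)||(c_n), where b_n ≡ 0 and c_n = d^n. Then AAR_{(a_n)} = {0, +∞}. -/
open Filter Topology

/-- Arithmetic mean of the first `n` terms of a real sequence. -/
noncomputable def avgSeq (a : ℕ → ℝ) (n : ℕ) : ℝ := (∑ i ∈ Finset.range n, a i) / n

/-- `a` tends to `α ∈ ℝ̄` in average: the sequence of arithmetic means tends to `α`. -/
def avgTendsTo (a : ℕ → ℝ) (α : EReal) : Prop :=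
  Tendsto (fun n => ((avgSeq a n : ℝ) : EReal)) atTop (𝓝 α)

/-- The set of points of `ℝ̄` accessible in average by rearrangement of `a`. -/
def AAR (a : ℕ → ℝ) : Set EReal :=
  {α | ∃ p : ℕ → ℕ, Function.Bijective p ∧ avgTendsTo (fun n => a (p n)) α}

/-- The interleaving `(b_n)||(c_n)` (0-indexed: `a (2n) = b n`, `a (2n+1) = c n`). -/
noncomputable def interleave (b c : ℕ → ℝ) : ℕ → ℝ :=
  fun n => if n % 2 = 0 then b (n / 2) else c (n / 2)


section basic
variable {d : ℝ} (hd : 1 < d)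

local notation "a" => interleave (fun _ => (0:ℝ)) (fun n => d ^ (n + 1))

lemma a_even (m : ℕ) : (interleave (fun _ => (0:ℝ)) (fun n => d ^ (n + 1))) (2*m) = 0 := by
  simp [interleave, Nat.mul_mod_right]

lemma a_odd (m : ℕ) : (interleave (fun _ => (0:ℝ)) (fun n => d ^ (n + 1))) (2*m+1) = d^(m+1) := by
  have h1 : (2*m+1) % 2 = 1 := by omega
  have h2 : (2*m+1) / 2 = m := by omega
  simp [interleave, h1, h2]

lemma a_nonneg (hd : 1 < d) (k : ℕ) : 0 ≤ (interleave (fun _ => (0:ℝ)) (fun n => d ^ (n + 1))) k := by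
  unfold interleave
  split
  · exact le_refl _
  · positivity

lemma a_cases (hd : 1 < d) (k : ℕ) :
    (interleave (fun _ => (0:ℝ)) (fun n => d ^ (n + 1))) k = 0 ∨
    (k % 2 = 1 ∧ (interleave (fun _ => (0:ℝ)) (fun n => d ^ (n + 1))) k = d ^ (k/2 + 1)) := by
  unfold interleave
  rcases Nat.mod_two_eq_zero_or_one k with h | h
  · left; simp [h]
  · right; exact ⟨h, by simp [h]⟩

end basic

section top
variable {d : ℝ}

lemma pow_half_div_atTop (hd : 1 < d) :
    Tendsto (fun n : ℕ => d ^ (n/2) / n) atTop atTop := by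
  set r := Real.sqrt d with hr_def
  have hr : 1 < r := by
    rw [hr_def]
    nlinarith [Real.sq_sqrt (le_of_lt (lt_trans one_pos hd)), Real.sqrt_nonneg d,
      Real.sqrt_pos.mpr (lt_trans one_pos hd)]
  have hr0 : (0:ℝ) < r := lt_trans one_pos hr
  -- r^n / n → atTop
  have h1 : Tendsto (fun n : ℕ => ((n:ℝ))^1 / r ^ n) atTop (𝓝 0) :=
    tendsto_pow_const_div_const_pow_of_one_lt 1 hr
  have h2 : Tendsto (fun n : ℕ => ((n:ℝ))^1 / r ^ n) atTop (𝓝[>] 0) := by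
    apply tendsto_nhdsWithin_of_tendsto_nhds_of_eventually_within _ h1
    filter_upwards [eventually_ge_atTop 1] with n hn
    have : (0:ℝ) < n := by exact_mod_cast Nat.pos_of_ne_zero (by omega)
    exact div_pos (by simpa using this) (pow_pos hr0 n)
  have h3 : Tendsto (fun n : ℕ => r ^ n / (n:ℝ)) atTop atTop := by
    have := h2.inv_tendsto_nhdsGT_zero
    apply this.congr
    intro n
    simp [Pi.inv_apply, inv_div]
  -- shift: r^(n-1)/n → atTop
  have h4 : Tendsto (fun n : ℕ => r ^ (n-1) / (n:ℝ)) atTop atTop := by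
    have hs : Tendsto (fun n : ℕ => n - 1) atTop atTop := tendsto_sub_atTop_nat 1
    have h5 : Tendsto (fun m : ℕ => r ^ m / ((m:ℝ)+1)) atTop atTop := by
      have h6 : Tendsto (fun m : ℕ => r ^ (m+1) / ((m+1:ℕ):ℝ)) atTop atTop :=
        h3.comp (tendsto_add_atTop_nat 1)
      have h7 : Tendsto (fun m : ℕ => (r ^ (m+1) / ((m+1:ℕ):ℝ)) / r) atTop atTop :=
        h6.atTop_div_const hr0
      apply h7.congr
      intro m
      push_cast
      field_simp
      ring
    have h8 := h5.comp hs
    apply tendsto_atTop_mono' _ _ h8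
    filter_upwards [eventually_ge_atTop 1] with n hn
    have : ((n - 1 : ℕ):ℝ) + 1 = (n:ℝ) := by
      have : n - 1 + 1 = n := by omega
      exact_mod_cast congrArg (Nat.cast : ℕ → ℝ) this
    simp only [Function.comp]
    rw [this]
  -- d^(n/2) ≥ r^(n-1)
  apply tendsto_atTop_mono' _ _ h4
  filter_upwards [eventually_ge_atTop 1] with n hn
  have hdr : d = r^2 := (Real.sq_sqrt (le_of_lt (lt_trans one_pos hd))).symm
  have hpow : r ^ (n-1) ≤ d ^ (n/2) := by
    rw [hdr, ← pow_mul]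
    exact pow_le_pow_right₀ (le_of_lt hr) (by omega)
  have hn0 : (0:ℝ) < n := by exact_mod_cast Nat.pos_of_ne_zero (by omega)
  exact div_le_div_of_nonneg_right hpow hn0.le

end top

lemma coe_tendsto_top {A : ℕ → ℝ} (h : Tendsto A atTop atTop) :
    Tendsto (fun n => ((A n : ℝ) : EReal)) atTop (𝓝 ⊤) := by
  rw [EReal.tendsto_nhds_top_iff_real]
  intro x
  filter_upwards [h.eventually_gt_atTop x] with n hn
  exact_mod_cast hn

lemma top_mem_aux (hd : 1 < d) :
    Tendsto (fun n => avgSeq (interleave (fun _ => (0:ℝ)) (fun n => d ^ (n + 1))) n)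
      atTop atTop := by
  set a' := interleave (fun _ => (0:ℝ)) (fun n => d ^ (n + 1)) with ha'
  apply tendsto_atTop_mono' _ _ (pow_half_div_atTop hd)
  filter_upwards [eventually_ge_atTop 2] with n hn
  have hsum : d ^ (n/2) ≤ ∑ i ∈ Finset.range n, a' i := by
    have h2 : n/2 ≥ 1 := by omega
    have hi : 2*(n/2 - 1)+1 ∈ Finset.range n := by
      simp only [Finset.mem_range]; omega
    have := Finset.single_le_sum (f := a') (fun i _ => a_nonneg hd i) hi
    rw [ha', a_odd (d := d) (n/2 - 1)] at this
    have he : n/2 - 1 + 1 = n/2 := by omega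
    rwa [he] at this
  have hn0 : (0:ℝ) < n := by exact_mod_cast Nat.pos_of_ne_zero (by omega)
  unfold avgSeq
  exact div_le_div_of_nonneg_right hsum hn0.le


lemma zero_mem {d : ℝ} (hd : 1 < d) :
    ∃ p : ℕ → ℕ, Function.Bijective p ∧
      Tendsto (fun n => (∑ i ∈ Finset.range n,
        (interleave (fun _ => (0:ℝ)) (fun n => d ^ (n + 1))) (p i)) / n) atTop (𝓝 0) := by
  classical
  set a' := interleave (fun _ => (0:ℝ)) (fun n => d ^ (n + 1)) with ha'
  set K := ⌈d⌉₊ with hK_def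
  have hd0 : (0:ℝ) < d := lt_trans one_pos hd
  have hKd : d ≤ (K:ℝ) := Nat.le_ceil d
  have hK2 : 2 ≤ K := by
    have h1 : (1:ℕ) < K := by exact_mod_cast lt_of_lt_of_le hd hKd
    omega
  -- the positions of the powers
  set f : ℕ → ℕ := fun m => (m+1) * K^(m+2) with hf_def
  have hKpow : ∀ j, 4 ≤ K^(j+2) := by
    intro j
    calc 4 = 2^2 := by norm_num
    _ ≤ K^2 := Nat.pow_le_pow_left hK2 2
    _ ≤ K^(j+2) := Nat.pow_le_pow_right (by omega) (by omega)
  have hmono : StrictMono f := by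
    apply strictMono_nat_of_lt_succ
    intro m
    have h1 : K^(m+2) ≤ K^(m+3) := Nat.pow_le_pow_right (by omega) (by omega)
    have h2 := hKpow m
    calc f m = (m+1) * K^(m+2) := rfl
    _ < (m+2) * K^(m+2) := by
        have := hKpow m
        nlinarith
    _ ≤ (m+2) * K^(m+3) := Nat.mul_le_mul_left _ h1
    _ = f (m+1) := rfl
  have hfm : ∀ m, m < f m := by
    intro m
    have := hKpow m
    calc m < m + 1 := by omega
    _ ≤ (m+1) * K^(m+2) := by nlinarith
  have hgap : ∀ m, f m + 1 < f (m+1) := by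
    intro m
    have h2 := hKpow m
    have h3 : K^(m+3) = K^(m+2) * K := by ring
    have h4 : K^(m+2)*2 ≤ K^(m+2)*K := Nat.mul_le_mul_left _ hK2
    calc f m + 1 = (m+1) * K^(m+2) + 1 := rfl
    _ < (m+2) * (K^(m+2) * K) := by nlinarith
    _ = f (m+1) := by rw [hf_def]; ring_nf
  set F : Set ℕ := Set.range f with hF_def
  have hFc_inf : (Fᶜ : Set ℕ).Infinite := by
    apply Set.infinite_of_injective_forall_mem (f := fun m => f m + 1)
    case hi =>
      intro x y hxy
      simp only at hxy
      exact hmono.injective (by omega)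
    case hf =>
      intro m
      simp only [Set.mem_compl_iff, hF_def, Set.mem_range, not_exists]
      intro m' hm'
      rcases lt_trichotomy m' (m+1) with h | h | h
      · have hm'm : m' ≤ m := by omega
        have := hmono.le_iff_le.mpr hm'm
        omega
      · subst h
        have := hgap m
        omega
      · have := hmono h
        have := hgap m
        omega
  haveI : Infinite ↥(Fᶜ) := hFc_inf.to_subtype
  obtain ⟨D⟩ := nonempty_denumerable ↥(Fᶜ)
  set e2 : ℕ ≃ ↥(Fᶜ) := (@Denumerable.eqv ↥(Fᶜ) D).symm with he2
  set e1 : ℕ ≃ ↥F := Equiv.ofInjective f hmono.injective with he1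
  have he1_apply : ∀ m, (e1 m : ℕ) = f m := fun m => rfl
  have he1_symm : ∀ (m : ℕ) (h : f m ∈ F), e1.symm ⟨f m, h⟩ = m := by
    intro m h
    rw [Equiv.symm_apply_eq]
    exact Subtype.ext rfl
  set p : ℕ → ℕ := fun n =>
    if h : n ∈ F then 2 * (e1.symm ⟨n, h⟩) + 1 else 2 * (e2.symm ⟨n, h⟩) with hp_def
  set P : ℕ → ℕ := fun k => if k % 2 = 0 then (e2 (k/2) : ℕ) else f (k/2) with hP_def
  have hpf : ∀ m : ℕ, p (f m) = 2 * m + 1 := by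
    intro m
    have h : f m ∈ F := ⟨m, rfl⟩
    simp only [hp_def, dif_pos h, he1_symm m h]
  have hpc : ∀ n : ℕ, (h : n ∉ F) → p n = 2 * (e2.symm ⟨n, h⟩) := by
    intro n h
    simp only [hp_def, dif_neg h]
  have hbij : Function.Bijective p := by
    rw [Function.bijective_iff_has_inverse]
    refine ⟨P, ?_, ?_⟩
    · intro n
      by_cases h : n ∈ F
      · obtain ⟨m, rfl⟩ := h
        rw [hpf m]
        simp only [hP_def]
        have : (2*m+1) % 2 = 1 := by omega
        rw [if_neg (by omega)]
        congr 1
        omega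
      · rw [hpc n h]
        simp only [hP_def]
        rw [if_pos (by omega)]
        have : (2 * (e2.symm ⟨n, h⟩) : ℕ) / 2 = (e2.symm ⟨n, h⟩ : ℕ) := by omega
        rw [this, Equiv.apply_symm_apply]
    · intro k
      rcases Nat.even_or_odd k with ⟨m, hm⟩ | ⟨m, hm⟩
      · subst hm
        simp only [hP_def]
        rw [if_pos (by omega)]
        have h2 : (m + m) / 2 = m := by omega
        rw [h2]
        have hmem : ((e2 m : ℕ)) ∉ F := (e2 m).2
        rw [hpc _ hmem]
        have : (⟨(e2 m : ℕ), hmem⟩ : ↥(Fᶜ)) = e2 m := Subtype.ext rfl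
        rw [this, Equiv.symm_apply_apply]
        omega
      · subst hm
        simp only [hP_def]
        rw [if_neg (by omega)]
        have h2 : (2*m+1) / 2 = m := by omega
        rw [h2, hpf m]
  refine ⟨p, hbij, ?_⟩
  have hq_pow : ∀ m : ℕ, a' (p (f m)) = d^(m+1) := by
    intro m; rw [hpf m]; exact a_odd m
  have hq_zero : ∀ n, n ∉ F → a' (p n) = 0 := by
    intro n h; rw [hpc n h]; exact a_even _
  have hq_nonneg : ∀ i, 0 ≤ a' (p i) := by
    intro i
    by_cases h : i ∈ F
    · obtain ⟨m, rfl⟩ := h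
      rw [hq_pow m]
      positivity
    · rw [hq_zero i h]
  -- sum identity
  have hsum_eq : ∀ n : ℕ, ∑ i ∈ Finset.range n, a' (p i)
      = ∑ m ∈ (Finset.range n).filter (fun m => f m < n), d^(m+1) := by
    intro n
    set T := (Finset.range n).filter (fun m => f m < n) with hT
    have him : Finset.image f T ⊆ Finset.range n := by
      intro i hi
      obtain ⟨m, hm, rfl⟩ := Finset.mem_image.mp hi
      simp only [hT, Finset.mem_filter] at hm
      exact Finset.mem_range.mpr hm.2
    have h0 : ∀ i ∈ Finset.range n, i ∉ Finset.image f T → a' (p i) = 0 := by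
      intro i hi hni
      by_cases h : i ∈ F
      · exfalso
        obtain ⟨m, rfl⟩ := h
        apply hni
        apply Finset.mem_image_of_mem
        simp only [hT, Finset.mem_filter, Finset.mem_range]
        have := Finset.mem_range.mp hi
        exact ⟨lt_trans (hfm m) this, this⟩
      · exact hq_zero i h
    rw [← Finset.sum_subset him h0]
    rw [Finset.sum_image (fun x _ y _ h => hmono.injective h)]
    exact Finset.sum_congr rfl (fun m _ => hq_pow m)
  -- the bound
  have hbound : ∀ (m0 n : ℕ), f m0 < n →
      (∑ i ∈ Finset.range n, a' (p i)) / n ≤ 1 / ((d-1) * (m0+1)) := by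
    intro m0 n hfn
    set T := (Finset.range n).filter (fun m => f m < n) with hT
    have hm0T : m0 ∈ T := by
      simp only [hT, Finset.mem_filter, Finset.mem_range]
      exact ⟨lt_trans (hfm m0) hfn, hfn⟩
    have hTne : T.Nonempty := ⟨m0, hm0T⟩
    set M := T.max' hTne with hM
    have hm0M : m0 ≤ M := Finset.le_max' T m0 hm0T
    have hMT : M ∈ T := T.max'_mem hTne
    have hfM : f M < n := by
      simp only [hT, Finset.mem_filter] at hMT
      exact hMT.2
    have hd1 : (0:ℝ) < d - 1 := by linarith
    -- sum bound
    have hS : (∑ m ∈ T, d^(m+1)) * (d - 1) ≤ d^(M+2) := by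
      have hsub : T ⊆ Finset.range (M+1) := by
        intro m hm
        exact Finset.mem_range.mpr (Nat.lt_succ_of_le (Finset.le_max' T m hm))
      have h1 : ∑ m ∈ T, d^(m+1) ≤ ∑ m ∈ Finset.range (M+1), d^(m+1) :=
        Finset.sum_le_sum_of_subset_of_nonneg hsub
          (fun m _ _ => le_of_lt (pow_pos hd0 _))
      have h2 : ∑ m ∈ Finset.range (M+1), d^(m+1) = d * ∑ m ∈ Finset.range (M+1), d^m := by
        rw [Finset.mul_sum]
        exact Finset.sum_congr rfl (fun m _ => by ring)
      have h3 : (∑ m ∈ Finset.range (M+1), d^m) * (d - 1) = d^(M+1) - 1 := geom_sum_mul d (M+1)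
      calc (∑ m ∈ T, d^(m+1)) * (d - 1) ≤ (∑ m ∈ Finset.range (M+1), d^(m+1)) * (d-1) := by
            apply mul_le_mul_of_nonneg_right h1 hd1.le
      _ = d * ((∑ m ∈ Finset.range (M+1), d^m) * (d-1)) := by rw [h2]; ring
      _ = d * (d^(M+1) - 1) := by rw [h3]
      _ ≤ d^(M+2) := by
            have : d^(M+2) = d * d^(M+1) := by ring
            nlinarith
    -- n bound
    have hn : ((M:ℝ)+1) * d^(M+2) ≤ (n:ℝ) := by
      have h1 : (f M : ℝ) ≤ (n:ℝ) := by exact_mod_cast le_of_lt hfM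
      have h2 : ((M:ℝ)+1) * d^(M+2) ≤ (f M : ℝ) := by
        have : (f M : ℝ) = ((M:ℝ)+1) * (K:ℝ)^(M+2) := by
          show ((((M+1) * K^(M+2) : ℕ)):ℝ) = _
          push_cast
          ring
        rw [this]
        apply mul_le_mul_of_nonneg_left _ (by positivity)
        exact pow_le_pow_left₀ hd0.le hKd _
      linarith
    have hn0 : (0:ℝ) < n := by
      have : 0 < n := lt_of_le_of_lt (Nat.zero_le _) hfn
      exact_mod_cast this
    rw [hsum_eq n, div_le_div_iff₀ hn0 (by positivity)]
    have hSnn : (0:ℝ) ≤ ∑ m ∈ T, d^(m+1) :=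
      Finset.sum_nonneg (fun m _ => le_of_lt (pow_pos hd0 _))
    have hdpow : (0:ℝ) < d^(M+2) := pow_pos hd0 _
    have hm0M' : ((m0:ℝ)+1) ≤ ((M:ℝ)+1) := by
      have : (m0:ℝ) ≤ (M:ℝ) := by exact_mod_cast hm0M
      linarith
    -- goal : S * ((d-1)*(m0+1)) ≤ n * 1
    have key : ((m0:ℝ)+1) * d^(M+2) ≤ (n:ℝ) := by
      have := mul_le_mul_of_nonneg_right hm0M' hdpow.le
      linarith
    nlinarith [mul_le_mul_of_nonneg_right hS (by positivity : (0:ℝ) ≤ (m0:ℝ)+1)]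
  -- conclude tendsto
  rw [Metric.tendsto_atTop]
  intro ε hε
  obtain ⟨m0, hm0⟩ := exists_nat_gt (1 / ((d-1) * ε))
  refine ⟨f m0 + 1, fun n hn => ?_⟩
  have hfn : f m0 < n := hn
  have hb := hbound m0 n hfn
  have hd1 : (0:ℝ) < d - 1 := by linarith
  have havg_nn : 0 ≤ (∑ i ∈ Finset.range n, a' (p i)) / n := by
    apply div_nonneg (Finset.sum_nonneg (fun i _ => hq_nonneg i)) (Nat.cast_nonneg n)
  rw [Real.dist_eq, sub_zero, abs_of_nonneg havg_nn]
  have hlt : 1 / ((d-1) * ((m0:ℝ)+1)) < ε := by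
    rw [div_lt_iff₀ (by positivity)]
    rw [div_lt_iff₀ (by positivity)] at hm0
    nlinarith
  exact lt_of_le_of_lt hb hlt


-- the jump lemma at a record index
lemma jump {d : ℝ} (hd : 1 < d) (p : ℕ → ℕ) (hp : Function.Bijective p) (n : ℕ)
    (hpos : 0 < (interleave (fun _ => (0:ℝ)) (fun n => d ^ (n + 1))) (p n))
    (hrec : ∀ i < n, (interleave (fun _ => (0:ℝ)) (fun n => d ^ (n + 1))) (p i)
      < (interleave (fun _ => (0:ℝ)) (fun n => d ^ (n + 1))) (p n)) :
    d * (∑ i ∈ Finset.range n, (interleave (fun _ => (0:ℝ)) (fun n => d ^ (n + 1))) (p i))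
      ≤ ∑ i ∈ Finset.range (n+1), (interleave (fun _ => (0:ℝ)) (fun n => d ^ (n + 1))) (p i) := by
  classical
  set a' := interleave (fun _ => (0:ℝ)) (fun n => d ^ (n + 1)) with ha'
  set q : ℕ → ℝ := fun i => a' (p i) with hq_def
  have hd0 : (0:ℝ) < d := lt_trans one_pos hd
  have hexp : ∀ i, q i ≠ 0 → p i = 2 * (p i / 2) + 1 ∧ q i = d ^ (p i / 2 + 1) := by
    intro i hi
    rcases a_cases hd (p i) with h | ⟨h1, h2⟩
    · exact absurd h hi
    · exact ⟨by omega, h2⟩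
  obtain ⟨hpn, hqn⟩ := hexp n (ne_of_gt hpos)
  set m := p n / 2 with hm_def
  set U := (Finset.range n).filter (fun i => q i ≠ 0) with hU
  have hSU : ∑ i ∈ Finset.range n, q i = ∑ i ∈ U, q i :=
    (Finset.sum_filter_ne_zero _).symm
  have hφmem : ∀ i ∈ U, p i / 2 ∈ Finset.range m ∧ q i = d ^ (p i / 2 + 1) := by
    intro i hi
    simp only [hU, Finset.mem_filter, Finset.mem_range] at hi
    obtain ⟨hin, hi0⟩ := hi
    obtain ⟨h1, h2⟩ := hexp i hi0
    have hlt : q i < q n := hrec i hin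
    rw [h2, hqn] at hlt
    have : p i / 2 + 1 < m + 1 := by
      by_contra hc
      push_neg at hc
      exact absurd (pow_le_pow_right₀ (le_of_lt hd) hc) (not_le.mpr hlt)
    exact ⟨Finset.mem_range.mpr (by omega), h2⟩
  have hinj : ∀ i ∈ U, ∀ j ∈ U, p i / 2 = p j / 2 → i = j := by
    intro i hi j hj hij
    simp only [hU, Finset.mem_filter] at hi hj
    have h1 := (hexp i hi.2).1
    have h2 := (hexp j hj.2).1
    apply hp.1
    omega
  have hsum1 : ∑ i ∈ U, q i = ∑ j ∈ Finset.image (fun i => p i / 2) U, d ^ (j+1) := by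
    rw [Finset.sum_image hinj]
    exact Finset.sum_congr rfl (fun i hi => (hφmem i hi).2)
  have hsub : Finset.image (fun i => p i / 2) U ⊆ Finset.range m := by
    intro j hj
    obtain ⟨i, hi, rfl⟩ := Finset.mem_image.mp hj
    exact (hφmem i hi).1
  have hS_le : ∑ i ∈ Finset.range n, q i ≤ ∑ j ∈ Finset.range m, d ^ (j+1) := by
    rw [hSU, hsum1]
    exact Finset.sum_le_sum_of_subset_of_nonneg hsub (fun j _ _ => le_of_lt (pow_pos hd0 _))
  have hgeom : (∑ j ∈ Finset.range m, d ^ (j+1)) * (d - 1) = d^(m+1) - d := by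
    have h2 : ∑ j ∈ Finset.range m, d^(j+1) = d * ∑ j ∈ Finset.range m, d^j := by
      rw [Finset.mul_sum]; exact Finset.sum_congr rfl (fun j _ => by ring)
    have h3 : (∑ j ∈ Finset.range m, d^j) * (d - 1) = d^m - 1 := geom_sum_mul d m
    calc (∑ j ∈ Finset.range m, d ^ (j+1)) * (d-1)
        = d * ((∑ j ∈ Finset.range m, d^j) * (d-1)) := by rw [h2]; ring
    _ = d * (d^m - 1) := by rw [h3]
    _ = d^(m+1) - d := by ring
  have hkey : (∑ i ∈ Finset.range n, q i) * (d - 1) ≤ q n := by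
    have hd1 : (0:ℝ) ≤ d - 1 := by linarith
    calc (∑ i ∈ Finset.range n, q i) * (d - 1)
        ≤ (∑ j ∈ Finset.range m, d ^ (j+1)) * (d - 1) := mul_le_mul_of_nonneg_right hS_le hd1
    _ = d^(m+1) - d := hgeom
    _ ≤ d^(m+1) := by linarith
    _ = q n := hqn.symm
  rw [Finset.sum_range_succ]
  have hSnn : (0:ℝ) ≤ ∑ i ∈ Finset.range n, q i :=
    Finset.sum_nonneg (fun i _ => a_nonneg hd (p i))
  nlinarith

-- record indices exist beyond any bound
lemma record_exists {d : ℝ} (hd : 1 < d) (p : ℕ → ℕ) (hp : Function.Bijective p) (N : ℕ) :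
    ∃ n, N ≤ n ∧ 0 < (interleave (fun _ => (0:ℝ)) (fun n => d ^ (n + 1))) (p n) ∧
      ∀ i < n, (interleave (fun _ => (0:ℝ)) (fun n => d ^ (n + 1))) (p i)
        < (interleave (fun _ => (0:ℝ)) (fun n => d ^ (n + 1))) (p n) := by
  classical
  set a' := interleave (fun _ => (0:ℝ)) (fun n => d ^ (n + 1)) with ha'
  set q : ℕ → ℝ := fun i => a' (p i) with hq_def
  set B := ((Finset.range (N+1)).image q).max' (Finset.image_nonempty.mpr ⟨0, by simp⟩) with hB
  have hBq : ∀ i ≤ N, q i ≤ B :=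
    fun i hi => Finset.le_max' _ _ (Finset.mem_image_of_mem q (Finset.mem_range.mpr (by omega)))
  have hB0 : 0 ≤ B := le_trans (a_nonneg hd (p 0)) (hBq 0 (Nat.zero_le N))
  obtain ⟨k, hk⟩ := pow_unbounded_of_one_lt B hd
  have hdk : B < d ^ (k+1) :=
    lt_of_lt_of_le hk (pow_le_pow_right₀ (le_of_lt hd) (by omega))
  obtain ⟨i0, hi0⟩ := hp.2 (2*k+1)
  have hex : ∃ n, B < q n := ⟨i0, by rw [hq_def]; simp only; rw [hi0, ha', a_odd]; exact hdk⟩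
  set n := Nat.find hex with hn
  have hqn : B < q n := Nat.find_spec hex
  refine ⟨n, ?_, ?_, ?_⟩
  · by_contra hc
    push_neg at hc
    exact absurd (hBq n (by omega)) (not_le.mpr hqn)
  · exact lt_of_le_of_lt hB0 hqn
  · intro i hi
    have := Nat.find_min hex hi
    push_neg at this
    exact lt_of_le_of_lt this hqn

-- main subset lemma
lemma aar_subset {d : ℝ} (hd : 1 < d) (p : ℕ → ℕ) (hp : Function.Bijective p) (α : EReal)
    (h : Tendsto (fun n => (((∑ i ∈ Finset.range n,
        (interleave (fun _ => (0:ℝ)) (fun n => d ^ (n + 1))) (p i)) / n : ℝ) : EReal))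
      atTop (𝓝 α)) : α = 0 ∨ α = ⊤ := by
  classical
  set a' := interleave (fun _ => (0:ℝ)) (fun n => d ^ (n + 1)) with ha'
  set q : ℕ → ℝ := fun i => a' (p i) with hq_def
  set S : ℕ → ℝ := fun n => ∑ i ∈ Finset.range n, q i with hS_def
  set A : ℕ → ℝ := fun n => S n / n with hA_def
  have hd0 : (0:ℝ) < d := lt_trans one_pos hd
  have hA_nonneg : ∀ n, 0 ≤ A n := fun n =>
    div_nonneg (Finset.sum_nonneg (fun i _ => a_nonneg hd (p i))) (Nat.cast_nonneg n)
  have hα0 : (0:EReal) ≤ α := by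
    apply ge_of_tendsto' h
    intro n
    exact_mod_cast hA_nonneg n
  induction α using EReal.rec with
  | bot => exact absurd hα0 (by simp)
  | top => exact Or.inr rfl
  | coe x =>
    left
    have hx : Tendsto A atTop (𝓝 x) := EReal.tendsto_coe.mp h
    have hx0 : 0 ≤ x := ge_of_tendsto' hx hA_nonneg
    rcases eq_or_lt_of_le hx0 with heq | hlt
    · rw [← heq]; rfl
    exfalso
    -- setup constants
    set c : ℝ := (d+1)/2 with hc_def
    have hc1 : 1 < c := by rw [hc_def]; linarith
    have hcd : c < d := by rw [hc_def]; linarith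
    set ε : ℝ := (c-1)*x/(c+1) with hε_def
    have hε0 : 0 < ε := by apply div_pos; nlinarith; linarith
    have hxε : 0 < x - ε := by
      have hεx : ε < x := by
        rw [hε_def, div_lt_iff₀ (by linarith : (0:ℝ) < c + 1)]
        nlinarith
      linarith
    have hkey : c * (x - ε) = x + ε := by
      rw [hε_def]
      field_simp
      ring
    -- N1 : approximation
    have hev : ∀ᶠ n in atTop, |A n - x| < ε := by
      have := Metric.tendsto_atTop.mp hx
      obtain ⟨N, hN⟩ := this ε hε0
      filter_upwards [eventually_ge_atTop N] with n hn
      simpa [Real.dist_eq] using hN n hn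
    obtain ⟨N1, hN1⟩ := eventually_atTop.mp hev
    -- N2 : n/(n+1) bound
    obtain ⟨N2, hN2⟩ := exists_nat_gt (c / (d - c))
    -- get a record index
    obtain ⟨n, hnN, hpos, hrec⟩ := record_exists hd p hp (max (N1+1) (N2+1))
    have hjump := jump hd p hp n hpos hrec
    have hn1 : 1 ≤ n := by omega
    have hnN1 : N1 ≤ n := by omega
    have hnN2 : (N2:ℝ) ≤ (n:ℝ) := by exact_mod_cast (by omega : N2 ≤ n)
    have hn0 : (0:ℝ) < n := by exact_mod_cast (by omega : 0 < n)
    have h1 : |A n - x| < ε := hN1 n hnN1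
    have h2 : |A (n+1) - x| < ε := hN1 (n+1) (by omega)
    have hAn : x - ε < A n := by cases abs_lt.mp h1; linarith
    have hAn1 : A (n+1) < x + ε := by cases abs_lt.mp h2; linarith
    -- d*n ≥ c*(n+1)
    have hdn : c * ((n:ℝ)+1) ≤ d * n := by
      have hdc : 0 < d - c := by linarith
      rw [div_lt_iff₀ hdc] at hN2
      nlinarith
    -- contradiction
    have hSn : S n = n * A n := by
      rw [hA_def]; field_simp
    have hSn1 : S (n+1) = ((n:ℝ)+1) * A (n+1) := by
      rw [hA_def]; push_cast; field_simp
    have hc0 : (0:ℝ) < c := by linarith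
    have hn10 : (0:ℝ) < (n:ℝ)+1 := by linarith
    have hcn0 : (0:ℝ) < c * ((n:ℝ)+1) := mul_pos hc0 hn10
    have chain : ((n:ℝ)+1) * (x + ε) > ((n:ℝ)+1) * (x + ε) := by
      calc ((n:ℝ)+1) * (x + ε) > ((n:ℝ)+1) * A (n+1) := mul_lt_mul_of_pos_left hAn1 hn10
      _ = S (n+1) := hSn1.symm
      _ ≥ d * S n := hjump
      _ = d * (n:ℝ) * A n := by rw [hSn]; ring
      _ ≥ c * ((n:ℝ)+1) * A n := mul_le_mul_of_nonneg_right hdn (hA_nonneg n)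
      _ > c * ((n:ℝ)+1) * (x - ε) := mul_lt_mul_of_pos_left hAn hcn0
      _ = ((n:ℝ)+1) * (c * (x - ε)) := by ring
      _ = ((n:ℝ)+1) * (x + ε) := by rw [hkey]
    exact absurd chain (lt_irrefl _)


/-- For `d > 1` and `(a_n) = (0)||(dⁿ)` (1-indexed, so the second component is
`d^(n+1)` in 0-indexed form), `AAR_{(a_n)} = {0, +∞}`. -/
theorem stmt13 (d : ℝ) (hd : 1 < d) :
    AAR (interleave (fun _ => 0) (fun n => d ^ (n + 1))) =
      {(0 : EReal), (⊤ : EReal)} := by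
  ext α
  simp only [AAR, Set.mem_setOf_eq, Set.mem_insert_iff, Set.mem_singleton_iff]
  constructor
  · rintro ⟨p, hp, hT⟩
    exact aar_subset hd p hp α hT
  · rintro (rfl | rfl)
    · obtain ⟨p, hp, h0⟩ := zero_mem hd
      refine ⟨p, hp, ?_⟩
      unfold avgTendsTo avgSeq
      have := EReal.tendsto_coe (a := (0:ℝ)).mpr h0
      simpa using this
    · refine ⟨id, Function.bijective_id, ?_⟩
      unfold avgTendsTo
      exact coe_tendsto_top (top_mem_aux hd)
end

section
/- Let (a_n) = (b_n)||(c_n), where b_n ≡ 0 and (c'_n) = (c_n) is a sequence of positive reals with c_n < n for all n and c_n → +∞. Then 1 ∈ AAR_{(a_n)}, i.e. 1 is accessible in average by rearrangement of (a_n). -/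
open Filter Topology

noncomputable def mseq (c : ℕ → ℝ) (k : ℕ) : ℕ := ⌈c k⌉₊

noncomputable def Mseq (c : ℕ → ℝ) (k : ℕ) : ℕ := ∑ j ∈ Finset.range k, mseq c j

noncomputable def blk (c : ℕ → ℝ) (N : ℕ) : ℕ := Nat.findGreatest (fun k => Mseq c k ≤ N) N

noncomputable def pfun (c : ℕ → ℝ) (N : ℕ) : ℕ :=
  if N = Mseq c (blk c N) then 2 * blk c N + 1
  else 2 * ((Mseq c (blk c N) - blk c N) + (N - Mseq c (blk c N) - 1))

section aux
variable {c : ℕ → ℝ}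

lemma mseq_pos (hpos : ∀ n, 0 < c n) (k : ℕ) : 1 ≤ mseq c k := Nat.ceil_pos.mpr (hpos k)

lemma Mseq_succ (k : ℕ) : Mseq c (k+1) = Mseq c k + mseq c k := Finset.sum_range_succ _ k

lemma Mseq_ge (hpos : ∀ n, 0 < c n) (k : ℕ) : k ≤ Mseq c k := by
  calc k = ∑ _j ∈ Finset.range k, 1 := by simp
  _ ≤ Mseq c k := Finset.sum_le_sum (fun j _ => mseq_pos hpos j)

lemma Mseq_mono (hpos : ∀ n, 0 < c n) : StrictMono (Mseq c) := by
  apply strictMono_nat_of_lt_succ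
  intro k
  rw [Mseq_succ]
  have := mseq_pos hpos k
  omega

lemma blk_le (N : ℕ) : Mseq c (blk c N) ≤ N :=
  Nat.findGreatest_spec (P := fun k => Mseq c k ≤ N) (Nat.zero_le N) (by simp [Mseq])

lemma blk_lt (hpos : ∀ n, 0 < c n) (N : ℕ) : N < Mseq c (blk c N + 1) := by
  by_contra h
  push_neg at h
  have h1 : blk c N + 1 ≤ N := le_trans (Mseq_ge hpos _) h
  have h2 : blk c N + 1 ≤ blk c N :=
    Nat.le_findGreatest (P := fun k => Mseq c k ≤ N) h1 h
  omega

lemma blk_eq (hpos : ∀ n, 0 < c n) {k N : ℕ} (h1 : Mseq c k ≤ N) (h2 : N < Mseq c (k+1)) : blk c N = k := by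
  have hb1 := blk_le (c := c) N
  have hb2 := blk_lt hpos (c := c) N
  rcases lt_trichotomy (blk c N) k with h | h | h
  · exact absurd (le_trans ((Mseq_mono hpos).monotone h) h1) (not_le.mpr hb2)
  · exact h
  · exact absurd (le_trans ((Mseq_mono hpos).monotone h) hb1) (not_le.mpr h2)

lemma pfun_zero (hpos : ∀ n, 0 < c n) (k : ℕ) : pfun c (Mseq c k) = 2 * k + 1 := by
  have hb : blk c (Mseq c k) = k :=
    blk_eq hpos le_rfl (Mseq_mono hpos (Nat.lt_succ_self k))
  simp [pfun, hb]

lemma pfun_pos (hpos : ∀ n, 0 < c n) {k r : ℕ} (hr1 : 1 ≤ r) (hr2 : r < mseq c k) :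
    pfun c (Mseq c k + r) = 2 * ((Mseq c k - k) + (r - 1)) := by
  have hb : blk c (Mseq c k + r) = k := by
    apply blk_eq hpos (Nat.le_add_right _ _)
    rw [Mseq_succ]; omega
  have hne : Mseq c k + r ≠ Mseq c k := by omega
  simp only [pfun, hb, if_neg hne]
  congr 2
  omega

noncomputable def Zseq (c : ℕ → ℝ) (k : ℕ) : ℕ := Mseq c k - k

lemma Zseq_succ (hpos : ∀ n, 0 < c n) (k : ℕ) :
    Zseq c (k+1) = Zseq c k + (mseq c k - 1) := by
  have h1 := Mseq_succ (c := c) k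
  have h2 := Mseq_ge hpos (c := c) k
  have h3 := mseq_pos hpos (c := c) k
  simp only [Zseq]
  omega

lemma Zseq_mono (hpos : ∀ n, 0 < c n) : Monotone (Zseq c) := by
  apply monotone_nat_of_le_succ
  intro k
  rw [Zseq_succ hpos]
  omega

lemma pfun_inj (hpos : ∀ n, 0 < c n) : Function.Injective (pfun c) := by
  have key : ∀ N1 N2, blk c N1 < blk c N2 → N1 ≠ Mseq c (blk c N1) →
      N2 ≠ Mseq c (blk c N2) → pfun c N1 = pfun c N2 → False := by
    intro N1 N2 hb h1 h2 h
    simp only [pfun, if_neg h1, if_neg h2] at h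
    have hZ : Zseq c (blk c N1 + 1) ≤ Zseq c (blk c N2) := Zseq_mono hpos hb
    have e1 := Zseq_succ hpos (c := c) (blk c N1)
    have l1 := blk_le (c := c) N1
    have l2 := blk_le (c := c) N2
    have u1 := blk_lt hpos (c := c) N1
    have u2 := blk_lt hpos (c := c) N2
    rw [Mseq_succ] at u1 u2
    have g1 := Mseq_ge hpos (c := c) (blk c N1)
    have g2 := Mseq_ge hpos (c := c) (blk c N2)
    simp only [Zseq] at hZ e1
    omega
  intro N1 N2 h
  by_cases h1 : N1 = Mseq c (blk c N1) <;> by_cases h2 : N2 = Mseq c (blk c N2)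
  · have := h
    simp only [pfun, if_pos h1, if_pos h2] at this
    have hb : blk c N1 = blk c N2 := by omega
    rw [h1, h2, hb]
  · exfalso
    simp only [pfun, if_pos h1, if_neg h2] at h
    omega
  · exfalso
    simp only [pfun, if_neg h1, if_pos h2] at h
    omega
  · rcases lt_trichotomy (blk c N1) (blk c N2) with hb | hb | hb
    · exact absurd (key N1 N2 hb h1 h2 h) (by simp)
    · have hth := h
      simp only [pfun, if_neg h1, if_neg h2] at hth
      rw [hb] at hth
      have l1 := blk_le (c := c) N1
      have l2 := blk_le (c := c) N2
      rw [hb] at l1 h1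
      omega
    · exact absurd (key N2 N1 hb h2 h1 h.symm) (by simp)

lemma pfun_surj (hpos : ∀ n, 0 < c n) (htop : Tendsto c atTop atTop) :
    Function.Surjective (pfun c) := by
  -- Zseq is unbounded
  obtain ⟨k0, hk0⟩ : ∃ k0, ∀ j ≥ k0, (2:ℝ) ≤ c j :=
    (htop.eventually_ge_atTop 2).exists_forall_of_atTop
  have hm2 : ∀ j ≥ k0, 2 ≤ mseq c j := by
    intro j hj
    have : (2:ℝ) ≤ (⌈c j⌉₊ : ℝ) := le_trans (hk0 j hj) (Nat.le_ceil _)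
    exact_mod_cast this
  have hZub : ∀ t, t ≤ Zseq c (k0 + t) := by
    intro t
    induction t with
    | zero => omega
    | succ n ih =>
      have e : k0 + (n + 1) = (k0 + n) + 1 := rfl
      rw [e]
      have := Zseq_succ hpos (c := c) (k0 + n)
      have := hm2 (k0 + n) (Nat.le_add_right _ _)
      omega
  intro n
  rcases Nat.even_or_odd n with ⟨z, hz⟩ | ⟨k, hk⟩
  · -- even: n = 2z
    have hex : ∃ k, z < Zseq c k :=
      ⟨k0 + z + 1, by have h := hZub (z+1); have e : k0 + (z+1) = k0 + z + 1 := rfl; rw [e] at h; omega⟩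
    set k1 := Nat.find hex with hk1
    have hlt1 : z < Zseq c k1 := Nat.find_spec hex
    have hk1pos : 1 ≤ k1 := by
      rcases Nat.eq_zero_or_pos k1 with h | h
      · exfalso; rw [h] at hlt1; simp [Zseq, Mseq] at hlt1
      · exact h
    have hge : ¬ z < Zseq c (k1 - 1) := Nat.find_min hex (by omega)
    push_neg at hge
    set k := k1 - 1
    have hZs : Zseq c (k + 1) = Zseq c k + (mseq c k - 1) := Zseq_succ hpos k
    have hk1eq : k + 1 = k1 := by omega
    rw [hk1eq] at hZs
    refine ⟨Mseq c k + (z - Zseq c k + 1), ?_⟩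
    rw [pfun_pos hpos (by omega) (by omega)]
    have := Mseq_ge hpos (c := c) k
    simp only [Zseq] at hge hlt1 hZs ⊢
    omega
  · exact ⟨Mseq c k, by rw [pfun_zero hpos k, hk]⟩

noncomputable def Cseq (c : ℕ → ℝ) (k : ℕ) : ℝ := ∑ j ∈ Finset.range k, c j

noncomputable def Sfun (c : ℕ → ℝ) (N : ℕ) : ℝ :=
  ∑ i ∈ Finset.range N, interleave (fun _ => 0) c (pfun c i)

lemma interleave_odd (k : ℕ) : interleave (fun _ => 0) c (2 * k + 1) = c k := by
  have h1 : (2 * k + 1) % 2 = 1 := by omega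
  have h2 : (2 * k + 1) / 2 = k := by omega
  simp [interleave, h1, h2]

lemma interleave_even (z : ℕ) : interleave (fun _ => 0) c (2 * z) = 0 := by
  have h1 : (2 * z) % 2 = 0 := by omega
  simp [interleave, h1]

lemma aval (hpos : ∀ n, 0 < c n) {k r : ℕ} (hr : r < mseq c k) :
    interleave (fun _ => 0) c (pfun c (Mseq c k + r)) = if r = 0 then c k else 0 := by
  rcases Nat.eq_zero_or_pos r with h | h
  · subst h
    rw [Nat.add_zero, pfun_zero hpos, interleave_odd, if_pos rfl]
  · rw [pfun_pos hpos h hr, interleave_even, if_neg (by omega)]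

lemma S_part (hpos : ∀ n, 0 < c n) (k : ℕ) {r : ℕ} (hr : r ≤ mseq c k) :
    Sfun c (Mseq c k + r) = Sfun c (Mseq c k) + (if r = 0 then 0 else c k) := by
  simp only [Sfun]
  rw [Finset.sum_range_add]
  congr 1
  have he : ∀ j ∈ Finset.range r,
      interleave (fun _ => 0) c (pfun c (Mseq c k + j)) = if j = 0 then c k else 0 := by
    intro j hj
    rw [Finset.mem_range] at hj
    exact aval hpos (by omega)
  rw [Finset.sum_congr rfl he, Finset.sum_ite_eq' (Finset.range r) 0 (fun _ => c k)]
  by_cases h : r = 0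
  · subst h; simp
  · simp [h, Nat.pos_of_ne_zero h]

lemma S_M (hpos : ∀ n, 0 < c n) (k : ℕ) : Sfun c (Mseq c k) = Cseq c k := by
  induction k with
  | zero => simp [Sfun, Cseq, Mseq]
  | succ n ih =>
    have h1 : Mseq c (n+1) = Mseq c n + mseq c n := Mseq_succ n
    have h2 := S_part hpos (c := c) n (le_refl (mseq c n))
    have h3 := mseq_pos hpos (c := c) n
    rw [h1, h2, if_neg (by omega), ih]
    simp [Cseq, Finset.sum_range_succ]

lemma S_val (hpos : ∀ n, 0 < c n) (N : ℕ) :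
    Sfun c N = Cseq c (blk c N) + (if N = Mseq c (blk c N) then 0 else c (blk c N)) := by
  have l1 := blk_le (c := c) N
  have l2 := blk_lt hpos (c := c) N
  rw [Mseq_succ] at l2
  have hN : Mseq c (blk c N) + (N - Mseq c (blk c N)) = N := by omega
  have key := S_part hpos (c := c) (blk c N) (r := N - Mseq c (blk c N)) (by omega)
  rw [hN, S_M hpos] at key
  rw [key]
  congr 1
  by_cases h : N - Mseq c (blk c N) = 0
  · rw [if_pos h, if_pos (by omega)]
  · rw [if_neg h, if_neg (by omega)]

lemma C_le_M (hpos : ∀ n, 0 < c n) (k : ℕ) : Cseq c k ≤ (Mseq c k : ℝ) := by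
  rw [Mseq, Nat.cast_sum]
  exact Finset.sum_le_sum (fun j _ => Nat.le_ceil (c j))

lemma M_le_C (hpos : ∀ n, 0 < c n) (k : ℕ) : (Mseq c k : ℝ) ≤ Cseq c k + k := by
  rw [Mseq, Nat.cast_sum]
  calc (∑ j ∈ Finset.range k, (mseq c j : ℝ)) ≤ ∑ j ∈ Finset.range k, (c j + 1) :=
        Finset.sum_le_sum (fun j _ => le_of_lt (Nat.ceil_lt_add_one (le_of_lt (hpos j))))
  _ = Cseq c k + k := by rw [Finset.sum_add_distrib, Cseq]; simp

lemma S_bound (hpos : ∀ n, 0 < c n) (hlt : ∀ n, c n < (n : ℝ) + 1) (N : ℕ) :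
    |Sfun c N - (N : ℝ)| ≤ (blk c N : ℝ) + 1 := by
  have hble : Mseq c (blk c N) ≤ N := blk_le (c := c) N
  set b := blk c N with hb
  have hS := S_val hpos (c := c) N
  have h1 := C_le_M hpos (c := c) b
  have h2 := M_le_C hpos (c := c) b
  have h1' := C_le_M hpos (c := c) (b+1)
  have h2' := M_le_C hpos (c := c) (b+1)
  have hCs : Cseq c (b+1) = Cseq c b + c b := Finset.sum_range_succ _ b
  have hMs : (Mseq c (b+1) : ℝ) = (Mseq c b : ℝ) + (mseq c b : ℝ) := by
    rw [Mseq_succ]; push_cast; ring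
  have hl1 : (Mseq c b : ℝ) ≤ N := by exact_mod_cast blk_le (c := c) N
  have hl2n := blk_lt hpos (c := c) N
  have hl2 : (N : ℝ) + 1 ≤ (Mseq c (b+1) : ℝ) := by exact_mod_cast hl2n
  have hcb := hlt b
  have hcbp := hpos b
  have hcast : ((b : ℝ) + 1 : ℝ) = ((b + 1 : ℕ) : ℝ) := by push_cast; ring
  rw [abs_le]
  by_cases h : N = Mseq c b
  · rw [hS, if_pos h]
    have hNe : (N : ℝ) = (Mseq c b : ℝ) := by exact_mod_cast h
    constructor <;> [linarith; linarith]
  · rw [hS, if_neg h]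
    have hl1' : (Mseq c b : ℝ) + 1 ≤ N := by
      have : Mseq c b + 1 ≤ N := by omega
      exact_mod_cast this
    constructor <;> [linarith; linarith]

end aux

/-- For `(a_n) = (0)||(c_n)` with `0 < c_n`, `c_n` less than its (1-based) index,
and `c_n → +∞`, the point `1` is accessible in average by rearrangement. -/
theorem stmt14 (c : ℕ → ℝ) (hpos : ∀ n, 0 < c n)
    (hlt : ∀ n, c n < (n : ℝ) + 1) (htop : Tendsto c atTop atTop) :
    (1 : EReal) ∈ AAR (interleave (fun _ => 0) c) := by
  refine ⟨pfun c, ⟨pfun_inj hpos, pfun_surj hpos htop⟩, ?_⟩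
  have hlim : Tendsto (fun N : ℕ => Sfun c N / N) atTop (𝓝 1) := by
    rw [Metric.tendsto_atTop]
    intro ε hε
    obtain ⟨j0, hj0⟩ : ∃ j0, ∀ j ≥ j0, 4 / ε ≤ c j :=
      (htop.eventually_ge_atTop (4/ε)).exists_forall_of_atTop
    set K0 := 2 * j0 + 2 with hK0
    have hCk : ∀ k, K0 ≤ k → ((k:ℝ) + 1) ≤ (ε/2) * Cseq c k ∧ 0 < Cseq c k := by
      intro k hk
      have hsub : Finset.Ico j0 k ⊆ Finset.range k := by
        intro x hx
        rw [Finset.mem_range]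
        exact (Finset.mem_Ico.mp hx).2
      have h1 : ∑ j ∈ Finset.Ico j0 k, c j ≤ Cseq c k :=
        Finset.sum_le_sum_of_subset_of_nonneg hsub (fun j _ _ => le_of_lt (hpos j))
      have h2 : (Finset.Ico j0 k).card • (4/ε) ≤ ∑ j ∈ Finset.Ico j0 k, c j :=
        Finset.card_nsmul_le_sum _ _ _ (fun j hj => hj0 j (Finset.mem_Ico.mp hj).1)
      rw [Nat.card_Ico, nsmul_eq_mul] at h2
      have hcast : ((k - j0 : ℕ) : ℝ) = (k : ℝ) - (j0 : ℝ) := by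
        rw [Nat.cast_sub (by omega)]
      rw [hcast] at h2
      have hklb : (2 * (j0:ℝ) + 2) ≤ (k : ℝ) := by exact_mod_cast hk
      have he1 : ((k:ℝ) - j0) * (4/ε) = (4/ε) * ((k:ℝ) - j0) := by ring
      have hepos : 0 < 4 / ε := by positivity
      have hClb : ((k:ℝ) - j0) * (4/ε) ≤ Cseq c k := le_trans h2 h1
      have hCpos : 0 < Cseq c k := lt_of_lt_of_le (by nlinarith) hClb
      constructor
      · have e2 : (ε/2) * (((k:ℝ) - j0) * (4/ε)) = 2 * ((k:ℝ) - j0) := by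
          field_simp
          ring
        have e3 : (ε/2) * (((k:ℝ) - j0) * (4/ε)) ≤ (ε/2) * Cseq c k :=
          mul_le_mul_of_nonneg_left hClb (by positivity)
        nlinarith
      · exact hCpos
    refine ⟨Mseq c K0 + 1, fun N hN => ?_⟩
    have hble : Mseq c (blk c N) ≤ N := blk_le (c := c) N
    set b := blk c N with hb
    have hbK : K0 ≤ b := by
      apply Nat.le_findGreatest (P := fun k => Mseq c k ≤ N)
      · exact le_trans (Mseq_ge hpos K0) (by omega)
      · omega
    obtain ⟨hC1, hC2⟩ := hCk b hbK
    have hNpos : (1:ℝ) ≤ (N:ℝ) := by exact_mod_cast Nat.one_le_iff_ne_zero.mpr (by omega)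
    have hNC : Cseq c b ≤ (N:ℝ) := by
      refine le_trans (C_le_M hpos b) ?_
      exact_mod_cast hble
    have hbd := S_bound hpos hlt N
    rw [← hb] at hbd
    have heq : Sfun c N / N - 1 = (Sfun c N - N) / N := by
      field_simp
    rw [Real.dist_eq, heq, abs_div, abs_of_nonneg (by linarith : (0:ℝ) ≤ (N:ℝ))]
    have step1 : |Sfun c N - (N:ℝ)| / (N:ℝ) ≤ ((b:ℝ) + 1) / Cseq c b := by
      gcongr
    have step2 : ((b:ℝ) + 1) / Cseq c b ≤ ε / 2 := by
      rw [div_le_iff₀ hC2]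
      linarith
    linarith
  show Tendsto (fun n => ((avgSeq (fun n => interleave (fun _ => 0) c (pfun c n)) n : ℝ) : EReal)) atTop (𝓝 (1 : EReal))
  have h1 : (1 : EReal) = ((1 : ℝ) : EReal) := by norm_cast
  rw [h1]
  apply EReal.tendsto_coe.mpr
  exact hlim
end

section
/- Let (c_n) be a sequence of positive reals with c_n → +∞ and c_{n-1}/c_n → 1 as n → ∞. Then (c_n) is balanced, i.e. c_n / (c_1 + ⋯ + c_{n-1}) → 0 as n → ∞. -/
open Filter Topology

/-- If `c_n > 0`, `c_n → +∞` and `c₍ₙ₋₁₎ / cₙ → 1`, then `(c_n)` is balanced: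
`cₙ / (c₁ + ⋯ + c₍ₙ₋₁₎) → 0`. -/
theorem stmt16 (c : ℕ → ℝ) (hpos : ∀ n, 0 < c n) (htop : Tendsto c atTop atTop)
    (hrat : Tendsto (fun n => c n / c (n + 1)) atTop (𝓝 1)) :
    Tendsto (fun n => c n / ∑ i ∈ Finset.range n, c i) atTop (𝓝 0) := by
  set S : ℕ → ℝ := fun n => ∑ i ∈ Finset.range n, c i with hSdef
  have hSpos : ∀ n, 1 ≤ n → 0 < S n := by
    intro n hn
    exact Finset.sum_pos (fun i _ => hpos i) (Finset.nonempty_range_iff.mpr (by omega))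
  have key : Tendsto (fun n => S n / c n) atTop atTop := by
    rw [tendsto_atTop]
    intro K0
    set K : ℝ := max K0 1 with hKdef
    have hK1 : (1:ℝ) ≤ K := le_max_right _ _
    set α : ℝ := 1 - 1/(2*(K+1)) with hαdef
    have hD : (0:ℝ) < 2*(K+1) := by nlinarith
    have hαmul : α * (2*(K+1)) = 2*(K+1) - 1 := by
      rw [hαdef]; field_simp
    have hαpos : 0 < α := by nlinarith
    have hα1 : α < 1 := by
      have : 0 < 1/(2*(K+1)) := by positivity
      rw [hαdef]; linarith
    have hK0K : K0 ≤ K := le_max_left _ _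
    have hev : ∀ᶠ n in atTop, α ≤ c n / c (n+1) :=
      hrat.eventually (eventually_ge_nhds hα1)
    clear_value α K
    rw [eventually_atTop] at hev
    obtain ⟨N0, hN0⟩ := hev
    set N : ℕ := N0 + 1 with hNdef
    have hN1 : 1 ≤ N := by omega
    have main : ∀ j : ℕ, min ((j:ℝ)/2) K ≤ S (N+j) / c (N+j) := by
      intro j
      induction j with
      | zero =>
        have h1 : 0 < S (N+0) / c (N+0) :=
          div_pos (hSpos _ (by omega)) (hpos _)
        have h2 : min (((0:ℕ):ℝ)/2) K ≤ 0 := by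
          rw [min_le_iff]; left; norm_num
        exact le_trans h2 h1.le
      | succ j ih =>
        have hq : α ≤ c (N+j) / c (N+j+1) := hN0 _ (by omega)
        have hc1 : 0 < c (N+j) := hpos _
        have hc2 : 0 < c (N+j+1) := hpos _
        have hupos : 0 < S (N+j) / c (N+j) := div_pos (hSpos _ (by omega)) (hpos _)
        set u : ℝ := S (N+j) / c (N+j) with hu
        set q : ℝ := c (N+j) / c (N+j+1) with hqd
        have hrec : S (N+j+1) / c (N+j+1) = q * (u + 1) := by
          have hS1 : S (N+j+1) = S (N+j) + c (N+j) := by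
            simp [hSdef, Finset.sum_range_succ, ← add_assoc]
          rw [hS1, hqd, hu]
          field_simp
        clear_value u q
        rw [show N + (j+1) = N + j + 1 from rfl, hrec]
        -- Now show min ((j+1)/2) K ≤ q * (u+1)
        have hstep : min u K + 1/2 ≤ α * (min u K + 1) := by
          have hxK : min u K ≤ K := min_le_right _ _
          have e : α * (min u K + 1) * (2*(K+1)) = (2*(K+1)-1) * (min u K + 1) := by
            linear_combination (min u K + 1) * hαmul
          have h2 : (min u K + 1/2) * (2*(K+1)) ≤ α * (min u K + 1) * (2*(K+1)) := by
            nlinarith [e, hxK]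
          exact le_of_mul_le_mul_right h2 hD
        have hmono : α * (min u K + 1) ≤ q * (u + 1) := by
          have h2 : α * (min u K + 1) ≤ α * (u + 1) :=
            mul_le_mul_of_nonneg_left (by linarith [min_le_left u K]) hαpos.le
          have h3 : α * (u + 1) ≤ q * (u + 1) :=
            mul_le_mul_of_nonneg_right hq (by linarith)
          linarith
        have hmm : min ((j:ℝ)/2) K ≤ min u K := le_min ih (min_le_right _ _)
        have hgoal : min ((j:ℝ)/2) K + 1/2 ≤ q * (u + 1) := by linarith
        push_cast
        rcases le_total ((j:ℝ)/2) K with h | h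
        · have hm : min ((j:ℝ)/2) K = (j:ℝ)/2 := min_eq_left h
          calc min (((j:ℝ)+1)/2) K ≤ ((j:ℝ)+1)/2 := min_le_left _ _
            _ ≤ q * (u+1) := by rw [hm] at hgoal; linarith
        · have hm : min ((j:ℝ)/2) K = K := min_eq_right h
          calc min (((j:ℝ)+1)/2) K ≤ K := min_le_right _ _
            _ ≤ q * (u+1) := by rw [hm] at hgoal; linarith
    obtain ⟨j₀, hj₀⟩ := exists_nat_ge (2*K)
    rw [eventually_atTop]
    refine ⟨N + j₀, fun n hn => ?_⟩
    have h1 := main (n - N)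
    rw [show N + (n - N) = n by omega] at h1
    have h2 : K ≤ ((n - N : ℕ):ℝ)/2 := by
      have hc : j₀ ≤ n - N := by omega
      have : (j₀:ℝ) ≤ ((n - N : ℕ):ℝ) := Nat.cast_le.mpr hc
      linarith
    have h3 : min (((n - N : ℕ):ℝ)/2) K = K := min_eq_right h2
    rw [h3] at h1
    linarith
  have hinv := key.inv_tendsto_atTop
  refine hinv.congr fun n => ?_
  simp [Pi.inv_apply, inv_div]
  rfl
end

section
/- Let (a_n) = (b_n)||(c_n), where limsup_{n→∞} b_n = b for some b ∈ ℝ, (c_n) is a sequence of positive reals with c_n → +∞, and c_n / (c_1 + ⋯ + c_{n-1}) → 0 as n → ∞. Then every real number c with c > b is accessible in average by rearrangement of (a_n), i.e. c ∈ AAR_{(a_n)}. -/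
open Filter Topology

open Finset

noncomputable section
namespace S17

variable (b c : ℕ → ℝ) (x : ℝ) (φ : ℕ → ℕ)

/-- enumeration of b-indices not in the moderate subsequence -/
def psi : ℕ → ℕ := Nat.nth (fun m => m ∉ Set.range φ)

def sumC (k : ℕ) : ℝ := ∑ i ∈ range k, c i
def sumM (i : ℕ) : ℝ := ∑ t ∈ range i, b (φ t)
def sumR (j : ℕ) : ℝ := ∑ t ∈ range j, b (psi φ t)

open Classical in
/-- one step of the greedy process: state (k,i,j) at time n -/
def next (n : ℕ) (s : ℕ × ℕ × ℕ) : ℕ × ℕ × ℕ :=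
  if sumC c s.1 + sumM b φ s.2.1 + sumR b φ s.2.2 ≤ x * n then (s.1 + 1, s.2.1, s.2.2)
  else if s.2.2 < s.2.1 ∧
      2 ^ (psi φ s.2.2 + 1) * (|b (psi φ s.2.2)| + |x| + 1) ≤ (n : ℝ) then
    (s.1, s.2.1, s.2.2 + 1)
  else (s.1, s.2.1 + 1, s.2.2)

def st : ℕ → ℕ × ℕ × ℕ
  | 0 => (0, 0, 0)
  | n + 1 => next b c x φ n (st n)

def kC (n : ℕ) : ℕ := (st b c x φ n).1
def iM (n : ℕ) : ℕ := (st b c x φ n).2.1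
def jR (n : ℕ) : ℕ := (st b c x φ n).2.2

def Cond1 (n : ℕ) : Prop :=
  sumC c (kC b c x φ n) + sumM b φ (iM b c x φ n) + sumR b φ (jR b c x φ n) ≤ x * n

def Cond2 (n : ℕ) : Prop :=
  jR b c x φ n < iM b c x φ n ∧
    2 ^ (psi φ (jR b c x φ n) + 1) * (|b (psi φ (jR b c x φ n))| + |x| + 1) ≤ (n : ℝ)

open Classical in
def pFun (n : ℕ) : ℕ :=
  if Cond1 b c x φ n then 2 * kC b c x φ n + 1
  else if Cond2 b c x φ n then 2 * psi φ (jR b c x φ n)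
  else 2 * φ (iM b c x φ n)

variable {b c x φ}

lemma st_zero : st b c x φ 0 = (0,0,0) := rfl

lemma st_succ_c {n : ℕ} (h : Cond1 b c x φ n) :
    kC b c x φ (n+1) = kC b c x φ n + 1 ∧ iM b c x φ (n+1) = iM b c x φ n ∧
      jR b c x φ (n+1) = jR b c x φ n := by
  have : st b c x φ (n+1) = next b c x φ n (st b c x φ n) := rfl
  unfold kC iM jR
  rw [this]
  unfold next
  split_ifs with g1 g2
  · exact ⟨rfl, rfl, rfl⟩
  · exact absurd h g1
  · exact absurd h g1

lemma st_succ_r {n : ℕ} (h1 : ¬ Cond1 b c x φ n) (h2 : Cond2 b c x φ n) :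
    kC b c x φ (n+1) = kC b c x φ n ∧ iM b c x φ (n+1) = iM b c x φ n ∧
      jR b c x φ (n+1) = jR b c x φ n + 1 := by
  have : st b c x φ (n+1) = next b c x φ n (st b c x φ n) := rfl
  unfold kC iM jR
  rw [this]
  unfold next
  split_ifs with g1 g2
  · exact absurd g1 h1
  · exact ⟨rfl, rfl, rfl⟩
  · exact absurd h2 g2

lemma st_succ_m {n : ℕ} (h1 : ¬ Cond1 b c x φ n) (h2 : ¬ Cond2 b c x φ n) :
    kC b c x φ (n+1) = kC b c x φ n ∧ iM b c x φ (n+1) = iM b c x φ n + 1 ∧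
      jR b c x φ (n+1) = jR b c x φ n := by
  have : st b c x φ (n+1) = next b c x φ n (st b c x φ n) := rfl
  unfold kC iM jR
  rw [this]
  unfold next
  split_ifs with g1 g2
  · exact absurd g1 h1
  · exact absurd g2 h2
  · exact ⟨rfl, rfl, rfl⟩

lemma pFun_c {n : ℕ} (h : Cond1 b c x φ n) : pFun b c x φ n = 2 * kC b c x φ n + 1 := by
  unfold pFun; split_ifs with g1 g2 <;> first | rfl | exact absurd h g1

lemma pFun_r {n : ℕ} (h1 : ¬ Cond1 b c x φ n) (h2 : Cond2 b c x φ n) :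
    pFun b c x φ n = 2 * psi φ (jR b c x φ n) := by
  unfold pFun; split_ifs with g1 g2 <;> first | rfl | exact absurd g1 h1 | exact absurd h2 g2

lemma pFun_m {n : ℕ} (h1 : ¬ Cond1 b c x φ n) (h2 : ¬ Cond2 b c x φ n) :
    pFun b c x φ n = 2 * φ (iM b c x φ n) := by
  unfold pFun; split_ifs with g1 g2 <;> first | rfl | exact absurd g1 h1 | exact absurd g2 h2

section Basic
variable {b c : ℕ → ℝ} {x : ℝ} {φ : ℕ → ℕ}

lemma step_split (b c : ℕ → ℝ) (x : ℝ) (φ : ℕ → ℕ) (n : ℕ) (P : Prop)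
    (hc : Cond1 b c x φ n → kC b c x φ (n+1) = kC b c x φ n + 1 → iM b c x φ (n+1) = iM b c x φ n →
      jR b c x φ (n+1) = jR b c x φ n → P)
    (hr : ¬ Cond1 b c x φ n → Cond2 b c x φ n → kC b c x φ (n+1) = kC b c x φ n →
      iM b c x φ (n+1) = iM b c x φ n → jR b c x φ (n+1) = jR b c x φ n + 1 → P)
    (hm : ¬ Cond1 b c x φ n → ¬ Cond2 b c x φ n → kC b c x φ (n+1) = kC b c x φ n →
      iM b c x φ (n+1) = iM b c x φ n + 1 → jR b c x φ (n+1) = jR b c x φ n → P) : P := by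
  by_cases h1 : Cond1 b c x φ n
  · obtain ⟨a1, a2, a3⟩ := st_succ_c h1; exact hc h1 a1 a2 a3
  · by_cases h2 : Cond2 b c x φ n
    · obtain ⟨a1, a2, a3⟩ := st_succ_r h1 h2; exact hr h1 h2 a1 a2 a3
    · obtain ⟨a1, a2, a3⟩ := st_succ_m h1 h2; exact hm h1 h2 a1 a2 a3

lemma kC_zero : kC b c x φ 0 = 0 := rfl
lemma iM_zero : iM b c x φ 0 = 0 := rfl
lemma jR_zero : jR b c x φ 0 = 0 := rfl

lemma coord_sum (n : ℕ) : kC b c x φ n + iM b c x φ n + jR b c x φ n = n := by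
  induction n with
  | zero => rfl
  | succ n ih =>
    refine step_split b c x φ n _ ?_ ?_ ?_
    · intro _ a1 a2 a3; omega
    · intro _ _ a1 a2 a3; omega
    · intro _ _ a1 a2 a3; omega

lemma kC_mono : Monotone (kC b c x φ) := by
  apply monotone_nat_of_le_succ
  intro n
  exact step_split b c x φ n _ (fun _ a1 _ _ => by omega) (fun _ _ a1 _ _ => by omega)
    (fun _ _ a1 _ _ => by omega)

lemma iM_mono : Monotone (iM b c x φ) := by
  apply monotone_nat_of_le_succ
  intro n
  exact step_split b c x φ n _ (fun _ _ a2 _ => by omega) (fun _ _ _ a2 _ => by omega)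
    (fun _ _ _ a2 _ => by omega)

lemma jR_mono : Monotone (jR b c x φ) := by
  apply monotone_nat_of_le_succ
  intro n
  exact step_split b c x φ n _ (fun _ _ _ a3 => by omega) (fun _ _ _ _ a3 => by omega)
    (fun _ _ _ _ a3 => by omega)

lemma jR_le_iM (n : ℕ) : jR b c x φ n ≤ iM b c x φ n := by
  induction n with
  | zero => exact le_refl 0
  | succ n ih =>
    refine step_split b c x φ n _ ?_ ?_ ?_
    · intro _ _ a2 a3; omega
    · intro _ h2 _ a2 a3; have := h2.1; omega
    · intro _ _ _ a2 a3; omega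

/-- the running excess -/
def EE (b c : ℕ → ℝ) (x : ℝ) (φ : ℕ → ℕ) (n : ℕ) : ℝ :=
  sumC c (kC b c x φ n) + sumM b φ (iM b c x φ n) + sumR b φ (jR b c x φ n) - x * n

lemma cond1_iff {n : ℕ} : Cond1 b c x φ n ↔ EE b c x φ n ≤ 0 := by
  unfold Cond1 EE
  constructor <;> intro h <;> linarith

lemma EE_succ_c {n : ℕ} (h : Cond1 b c x φ n) :
    EE b c x φ (n+1) = EE b c x φ n + (c (kC b c x φ n) - x) := by
  obtain ⟨a1, a2, a3⟩ := st_succ_c h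
  unfold EE
  rw [a1, a2, a3]
  have : sumC c (kC b c x φ n + 1) = sumC c (kC b c x φ n) + c (kC b c x φ n) :=
    Finset.sum_range_succ _ _
  rw [this]
  push_cast
  ring

lemma EE_succ_r {n : ℕ} (h1 : ¬ Cond1 b c x φ n) (h2 : Cond2 b c x φ n) :
    EE b c x φ (n+1) = EE b c x φ n + (b (psi φ (jR b c x φ n)) - x) := by
  obtain ⟨a1, a2, a3⟩ := st_succ_r h1 h2
  unfold EE
  rw [a1, a2, a3]
  have : sumR b φ (jR b c x φ n + 1) = sumR b φ (jR b c x φ n) + b (psi φ (jR b c x φ n)) :=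
    Finset.sum_range_succ _ _
  rw [this]
  push_cast
  ring

lemma EE_succ_m {n : ℕ} (h1 : ¬ Cond1 b c x φ n) (h2 : ¬ Cond2 b c x φ n) :
    EE b c x φ (n+1) = EE b c x φ n + (b (φ (iM b c x φ n)) - x) := by
  obtain ⟨a1, a2, a3⟩ := st_succ_m h1 h2
  unfold EE
  rw [a1, a2, a3]
  have : sumM b φ (iM b c x φ n + 1) = sumM b φ (iM b c x φ n) + b (φ (iM b c x φ n)) :=
    Finset.sum_range_succ _ _
  rw [this]
  push_cast
  ring

/-- eligibility invariant for placed R-terms -/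
lemma elig_inv (n : ℕ) :
    ∀ t < jR b c x φ n, 2 ^ (psi φ t + 1) * (|b (psi φ t)| + |x| + 1) ≤ (n : ℝ) := by
  induction n with
  | zero => intro t ht; simp [jR_zero] at ht
  | succ n ih =>
    have hstep : ∀ t < jR b c x φ n, 2 ^ (psi φ t + 1) * (|b (psi φ t)| + |x| + 1) ≤ ((n+1 : ℕ) : ℝ) := by
      intro t ht
      refine (ih t ht).trans ?_
      push_cast; linarith
    refine step_split b c x φ n _ (fun _ _ _ a3 => by rw [a3]; exact hstep) ?_
      (fun _ _ _ _ a3 => by rw [a3]; exact hstep)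
    intro h1 h2 _ _ a3
    rw [a3]
    intro t ht
    rcases Nat.lt_succ_iff_lt_or_eq.mp ht with h | h
    · exact hstep t h
    · subst h
      refine h2.2.trans ?_
      push_cast; linarith

lemma gsum (j : ℕ) : ∑ t ∈ range j, ((2:ℝ) ^ (t+1))⁻¹ = 1 - ((2:ℝ) ^ j)⁻¹ := by
  induction j with
  | zero => simp
  | succ j ih =>
    rw [Finset.sum_range_succ, ih]
    have h2 : ((2:ℝ) ^ j) ≠ 0 := by positivity
    field_simp
    ring

lemma gsum_le (j : ℕ) : ∑ t ∈ range j, ((2:ℝ) ^ (t+1))⁻¹ ≤ 1 := by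
  rw [gsum]
  have : (0:ℝ) < ((2:ℝ) ^ j)⁻¹ := by positivity
  linarith

lemma gsum_Ico {a B : ℕ} (h : a ≤ B) :
    ∑ t ∈ Finset.Ico a B, ((2:ℝ) ^ (t+1))⁻¹ ≤ ((2:ℝ) ^ a)⁻¹ := by
  rw [Finset.sum_Ico_eq_sub _ h, gsum, gsum]
  have : (0:ℝ) < ((2:ℝ) ^ B)⁻¹ := by positivity
  linarith

end Basic

section Helpers

lemma mono_hit {f : ℕ → ℕ} (h0 : f 0 = 0) (hstep : ∀ n, f (n+1) ≤ f n + 1)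
    (hmono : Monotone f) (hub : ∀ k, ∃ n, k < f n) (k : ℕ) :
    ∃ n, f n = k ∧ f (n+1) = k + 1 := by
  have hex : ∃ n, k < f (n+1) := by
    obtain ⟨n, hn⟩ := hub k
    exact ⟨n, lt_of_lt_of_le hn (hmono (Nat.le_succ n))⟩
  classical
  have h1 : k < f (Nat.find hex + 1) := Nat.find_spec hex
  have h2 : f (Nat.find hex) ≤ k := by
    rcases Nat.eq_zero_or_pos (Nat.find hex) with h | h
    · rw [h, h0]; omega
    · have hmin := Nat.find_min hex (m := Nat.find hex - 1) (by omega)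
      push_neg at hmin
      have hrw : Nat.find hex - 1 + 1 = Nat.find hex := by omega
      rwa [hrw] at hmin
  have h3 := hstep (Nat.find hex)
  exact ⟨Nat.find hex, by omega, by omega⟩

lemma mono_bdd_const {f : ℕ → ℕ} (hmono : Monotone f) (hbd : ¬ ∀ k, ∃ n, k < f n) :
    ∃ N, ∀ n, N ≤ n → f n = f N := by
  push_neg at hbd
  obtain ⟨k, hk⟩ := hbd
  have hne : (Set.range f).Nonempty := ⟨f 0, Set.mem_range_self 0⟩
  have hbdd : BddAbove (Set.range f) := ⟨k, by rintro y ⟨n, rfl⟩; exact hk n⟩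
  have hmem := Nat.sSup_mem hne hbdd
  obtain ⟨N, hN⟩ := hmem
  refine ⟨N, fun n hn => le_antisymm ?_ ?_⟩
  · rw [hN]; exact le_csSup hbdd (Set.mem_range_self n)
  · exact hmono hn

end Helpers

section Bounds
variable {b c : ℕ → ℝ} {x : ℝ} {φ : ℕ → ℕ}

lemma psi_strictMono (hinf : {m | m ∉ Set.range φ}.Infinite) : StrictMono (psi φ) :=
  Nat.nth_strictMono hinf

lemma psi_not_mem (hinf : {m | m ∉ Set.range φ}.Infinite) (t : ℕ) :
    psi φ t ∉ Set.range φ :=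
  Nat.nth_mem_of_infinite hinf t

lemma two_pow_anti {s t : ℕ} (h : s ≤ t) : ((2:ℝ) ^ t)⁻¹ ≤ ((2:ℝ) ^ s)⁻¹ := by
  apply inv_anti₀ (by positivity)
  exact pow_le_pow_right₀ (by norm_num) h

/-- per-term bound from the eligibility invariant -/
lemma elig_bound (hinf : {m | m ∉ Set.range φ}.Infinite) {n t : ℕ}
    (h : 2 ^ (psi φ t + 1) * (|b (psi φ t)| + |x| + 1) ≤ (n : ℝ)) :
    |b (psi φ t)| + |x| + 1 ≤ (n : ℝ) * ((2:ℝ) ^ (t+1))⁻¹ := by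
  have hψ0 : t ≤ psi φ t := (psi_strictMono hinf).le_apply
  have hψ : t + 1 ≤ psi φ t + 1 := by omega
  have hp : (0:ℝ) < 2 ^ (psi φ t + 1) := by positivity
  have h1 : |b (psi φ t)| + |x| + 1 ≤ (n : ℝ) * ((2:ℝ) ^ (psi φ t + 1))⁻¹ := by
    rw [← div_eq_mul_inv, le_div_iff₀ hp]
    nlinarith [h]
  have h2 : ((2:ℝ) ^ (psi φ t + 1))⁻¹ ≤ ((2:ℝ) ^ (t+1))⁻¹ := two_pow_anti hψ
  calc |b (psi φ t)| + |x| + 1 ≤ (n : ℝ) * ((2:ℝ) ^ (psi φ t + 1))⁻¹ := h1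
  _ ≤ (n : ℝ) * ((2:ℝ) ^ (t+1))⁻¹ := mul_le_mul_of_nonneg_left h2 (Nat.cast_nonneg n)

lemma sumR_abs (hinf : {m | m ∉ Set.range φ}.Infinite) (n : ℕ) :
    |sumR b φ (jR b c x φ n)| ≤ (n : ℝ) := by
  have h1 : |sumR b φ (jR b c x φ n)| ≤ ∑ t ∈ range (jR b c x φ n), |b (psi φ t)| :=
    Finset.abs_sum_le_sum_abs _ _
  have h2 : ∑ t ∈ range (jR b c x φ n), |b (psi φ t)| ≤
      ∑ t ∈ range (jR b c x φ n), (n : ℝ) * ((2:ℝ) ^ (t+1))⁻¹ := by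
    apply Finset.sum_le_sum
    intro t ht
    have hb := elig_bound (b := b) (x := x) hinf (elig_inv n t (Finset.mem_range.mp ht))
    have : (0:ℝ) ≤ |x| + 1 := by positivity
    linarith
  have h3 : ∑ t ∈ range (jR b c x φ n), (n : ℝ) * ((2:ℝ) ^ (t+1))⁻¹ ≤ (n : ℝ) := by
    rw [← Finset.mul_sum]
    calc (n:ℝ) * ∑ t ∈ range (jR b c x φ n), ((2:ℝ) ^ (t+1))⁻¹ ≤ (n:ℝ) * 1 :=
        mul_le_mul_of_nonneg_left (gsum_le _) (Nat.cast_nonneg n)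
    _ = n := mul_one _
  linarith

lemma sumM_abs {K : ℝ} (hmodK : ∀ i, |b (φ i)| ≤ K) (i : ℕ) :
    |sumM b φ i| ≤ K * i := by
  have h1 : |sumM b φ i| ≤ ∑ t ∈ range i, |b (φ t)| := Finset.abs_sum_le_sum_abs _ _
  have h2 : ∑ t ∈ range i, |b (φ t)| ≤ ∑ t ∈ range i, K :=
    Finset.sum_le_sum fun t _ => hmodK t
  rw [Finset.sum_const, card_range, nsmul_eq_mul, mul_comm] at h2
  linarith

lemma iM_le (n : ℕ) : iM b c x φ n ≤ n := by
  have := coord_sum (b := b) (c := c) (x := x) (φ := φ) n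
  omega

/-- bound on the c-mass when `Cond1` holds -/
lemma sumC_le {K : ℝ} (hinf : {m | m ∉ Set.range φ}.Infinite) (hmodK : ∀ i, |b (φ i)| ≤ K)
    (hK : 0 ≤ K) {n : ℕ} (h : Cond1 b c x φ n) :
    sumC c (kC b c x φ n) ≤ (|x| + K + 1) * n := by
  unfold Cond1 at h
  have h1 := sumR_abs (b := b) (c := c) (x := x) hinf n
  have h2 := sumM_abs hmodK (iM b c x φ n)
  have h3 : (iM b c x φ n : ℝ) ≤ (n : ℝ) := Nat.cast_le.mpr (iM_le n)
  have h4 : x * n ≤ |x| * n := mul_le_mul_of_nonneg_right (le_abs_self x) (Nat.cast_nonneg n)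
  have h5 : K * (iM b c x φ n : ℝ) ≤ K * n := mul_le_mul_of_nonneg_left h3 hK
  have h6 : - sumM b φ (iM b c x φ n) ≤ K * n := by
    have := abs_le.mp h2
    linarith
  have h7 : - sumR b φ (jR b c x φ n) ≤ (n : ℝ) := by
    have := abs_le.mp h1
    linarith
  nlinarith [Nat.cast_nonneg (α := ℝ) n]

end Bounds

section SumId
variable {b c : ℕ → ℝ} {x : ℝ} {φ : ℕ → ℕ}

lemma interleave_even (m : ℕ) : interleave b c (2 * m) = b m := by
  unfold interleave
  have h1 : 2 * m % 2 = 0 := by omega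
  have h2 : 2 * m / 2 = m := by omega
  rw [if_pos h1, h2]

lemma interleave_odd (k : ℕ) : interleave b c (2 * k + 1) = c k := by
  unfold interleave
  have h1 : (2 * k + 1) % 2 = 1 := by omega
  have h2 : (2 * k + 1) / 2 = k := by omega
  rw [h1, h2]
  norm_num

lemma sum_pFun (n : ℕ) :
    ∑ i ∈ range n, interleave b c (pFun b c x φ i) =
      sumC c (kC b c x φ n) + sumM b φ (iM b c x φ n) + sumR b φ (jR b c x φ n) := by
  induction n with
  | zero => simp [kC_zero, iM_zero, jR_zero, sumC, sumM, sumR]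
  | succ n ih =>
    rw [Finset.sum_range_succ, ih]
    refine step_split b c x φ n _ ?_ ?_ ?_
    · intro h1 a1 a2 a3
      rw [a1, a2, a3, pFun_c h1]
      have : sumC c (kC b c x φ n + 1) = sumC c (kC b c x φ n) + c (kC b c x φ n) :=
        Finset.sum_range_succ _ _
      rw [this, interleave_odd]
      ring
    · intro h1 h2 a1 a2 a3
      rw [a1, a2, a3, pFun_r h1 h2]
      have : sumR b φ (jR b c x φ n + 1) = sumR b φ (jR b c x φ n) + b (psi φ (jR b c x φ n)) :=
        Finset.sum_range_succ _ _
      rw [this, interleave_even]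
      ring
    · intro h1 h2 a1 a2 a3
      rw [a1, a2, a3, pFun_m h1 h2]
      have : sumM b φ (iM b c x φ n + 1) = sumM b φ (iM b c x φ n) + b (φ (iM b c x φ n)) :=
        Finset.sum_range_succ _ _
      rw [this, interleave_even]
      ring

lemma EE_eq_sum (n : ℕ) :
    EE b c x φ n = (∑ i ∈ range n, interleave b c (pFun b c x φ i)) - x * n := by
  rw [sum_pFun]; rfl

end SumId

section Dyn
variable {b c : ℕ → ℝ} {x γ K : ℝ} {φ : ℕ → ℕ}

lemma exists_inv_pow_le {δ : ℝ} (hδ : 0 < δ) : ∃ j : ℕ, ((2:ℝ) ^ j)⁻¹ ≤ δ := by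
  obtain ⟨j, hj⟩ := exists_nat_gt (1 / δ)
  refine ⟨j, ?_⟩
  have h2 : (j:ℝ) ≤ 2 ^ j := by exact_mod_cast (Nat.lt_two_pow_self (n := j)).le
  have h3 : 1 / δ < 2 ^ j := lt_of_lt_of_le hj h2
  have h5 : (0:ℝ) < 1 / δ := by positivity
  have h6 := inv_anti₀ h5 h3.le
  rwa [one_div, inv_inv] at h6

/-- if the excess stays positive forever, contradiction -/
lemma allb (hγ : 0 < γ) (hmodγ : ∀ i, b (φ i) ≤ x - γ)
    (hinf : {m | m ∉ Set.range φ}.Infinite)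
    (N₀ : ℕ) (hall : ∀ n, N₀ ≤ n → 0 < EE b c x φ n) : False := by
  have hnc : ∀ n, N₀ ≤ n → ¬ Cond1 b c x φ n := by
    intro n hn h
    have := cond1_iff.mp h
    linarith [hall n hn]
  have hkC : ∀ n, N₀ ≤ n → kC b c x φ n = kC b c x φ N₀ := by
    intro n hn
    induction n, hn using Nat.le_induction with
    | base => rfl
    | succ n hn ih =>
      refine step_split b c x φ n _ ?_ ?_ ?_
      · intro h1 _ _ _; exact absurd h1 (hnc n hn)
      · intro _ _ a1 _ _; rw [a1, ih]
      · intro _ _ a1 _ _; rw [a1, ih]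
  have hcnt : ∀ n, N₀ ≤ n → n ≤ 2 * iM b c x φ n + kC b c x φ N₀ := by
    intro n hn
    have h1 := coord_sum (b := b) (c := c) (x := x) (φ := φ) n
    have h2 := jR_le_iM (b := b) (c := c) (x := x) (φ := φ) n
    have h3 := hkC n hn
    omega
  obtain ⟨j₁, hj₁⟩ := exists_inv_pow_le (show (0:ℝ) < γ/4 by linarith)
  obtain ⟨N₂, hN₂0, hβ⟩ : ∃ N₂, N₀ ≤ N₂ ∧ ∀ n, N₂ ≤ n →
      (∑ t ∈ Finset.Ico (jR b c x φ N₂) (jR b c x φ n), ((2:ℝ) ^ (t+1))⁻¹) ≤ γ / 4 := by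
    by_cases hub : ∀ k, ∃ n, k < jR b c x φ n
    · obtain ⟨n', hn'⟩ := hub j₁
      refine ⟨max n' N₀, le_max_right _ _, fun n hn => ?_⟩
      have hj : j₁ ≤ jR b c x φ (max n' N₀) :=
        le_trans hn'.le (jR_mono (le_max_left _ _))
      calc ∑ t ∈ Finset.Ico (jR b c x φ (max n' N₀)) (jR b c x φ n), ((2:ℝ) ^ (t+1))⁻¹
          ≤ ((2:ℝ) ^ (jR b c x φ (max n' N₀)))⁻¹ := gsum_Ico (jR_mono hn)
        _ ≤ ((2:ℝ) ^ j₁)⁻¹ := two_pow_anti hj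
        _ ≤ γ / 4 := hj₁
    · obtain ⟨N', hN'⟩ := mono_bdd_const jR_mono hub
      refine ⟨max N' N₀, le_max_right _ _, fun n hn => ?_⟩
      have h1 : jR b c x φ n = jR b c x φ (max N' N₀) := by
        rw [hN' n (le_trans (le_max_left _ _) hn), hN' (max N' N₀) (le_max_left _ _)]
      rw [h1, Finset.Ico_self, Finset.sum_empty]
      linarith
  have hQ : ∀ n, N₂ ≤ n → EE b c x φ n ≤ EE b c x φ N₂
      - γ * ((iM b c x φ n : ℝ) - (iM b c x φ N₂ : ℝ))
      + n * ∑ t ∈ Finset.Ico (jR b c x φ N₂) (jR b c x φ n), ((2:ℝ) ^ (t+1))⁻¹ := by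
    intro n hn
    induction n, hn using Nat.le_induction with
    | base => rw [Finset.Ico_self, Finset.sum_empty]; simp
    | succ n hn ih =>
      have hβnn : (0:ℝ) ≤ ∑ t ∈ Finset.Ico (jR b c x φ N₂) (jR b c x φ n), ((2:ℝ)^(t+1))⁻¹ :=
        Finset.sum_nonneg fun t _ => by positivity
      have hnn : (0:ℝ) ≤ (n:ℝ) := Nat.cast_nonneg n
      refine step_split b c x φ n _ ?_ ?_ ?_
      · intro h1 _ _ _; exact absurd h1 (hnc n (le_trans hN₂0 hn))
      · intro h1 h2 a1 a2 a3
        have he := EE_succ_r h1 h2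
        have hb1 := elig_bound (b := b) (x := x) hinf h2.2
        have hinv : (0:ℝ) ≤ ((2:ℝ) ^ (jR b c x φ n + 1))⁻¹ := by positivity
        have habs : b (psi φ (jR b c x φ n)) - x ≤ (n:ℝ) * ((2:ℝ) ^ (jR b c x φ n + 1))⁻¹ := by
          have t1 : b (psi φ (jR b c x φ n)) ≤ |b (psi φ (jR b c x φ n))| := le_abs_self _
          have t2 : -x ≤ |x| := neg_le_abs x
          linarith
        have hmono' : jR b c x φ N₂ ≤ jR b c x φ n := jR_mono hn
        rw [he, a2, a3, Finset.sum_Ico_succ_top hmono']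
        push_cast
        nlinarith [ih, habs, hβnn, hinv, hnn]
      · intro h1 h2 a1 a2 a3
        have he := EE_succ_m h1 h2
        have hbb := hmodγ (iM b c x φ n)
        rw [he, a2, a3]
        push_cast
        nlinarith [ih, hβnn, hnn]
  set C : ℝ := EE b c x φ N₂ + γ * (kC b c x φ N₀ : ℝ) / 2 + γ * (iM b c x φ N₂ : ℝ) with hC
  obtain ⟨M, hM⟩ := exists_nat_gt ((4/γ) * C)
  set n := max M N₂ with hndef
  have hn₂ : N₂ ≤ n := le_max_right _ _
  have h1 := hQ n hn₂
  have h2 := hβ n hn₂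
  have h3 := hall n (le_trans hN₂0 hn₂)
  have h4' : (n:ℝ) ≤ 2 * (iM b c x φ n : ℝ) + (kC b c x φ N₀ : ℝ) := by
    exact_mod_cast hcnt n (le_trans hN₂0 hn₂)
  have h5 : (M:ℝ) ≤ (n:ℝ) := Nat.cast_le.mpr (le_max_left _ _)
  have h6 : (n:ℝ) * (∑ t ∈ Finset.Ico (jR b c x φ N₂) (jR b c x φ n), ((2:ℝ)^(t+1))⁻¹)
      ≤ (n:ℝ) * (γ/4) := mul_le_mul_of_nonneg_left h2 (Nat.cast_nonneg n)
  have hCn : (4/γ) * C < (n:ℝ) := lt_of_lt_of_le hM h5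
  have hCn2 : C < (γ/4) * (n:ℝ) := by
    have hmul := mul_lt_mul_of_pos_left hCn (show (0:ℝ) < γ/4 by linarith)
    have heq : (γ/4) * ((4/γ) * C) = C := by field_simp
    rwa [heq] at hmul
  have e1 : γ * ((n:ℝ) - (kC b c x φ N₀ : ℝ)) / 2 ≤ γ * (iM b c x φ n : ℝ) := by
    have : ((n:ℝ) - (kC b c x φ N₀ : ℝ)) / 2 ≤ (iM b c x φ n : ℝ) := by linarith
    nlinarith
  rw [hC] at hCn2
  linarith [h1, h3, h6, e1, hCn2]

lemma EE_nonpos_exists (hγ : 0 < γ) (hmodγ : ∀ i, b (φ i) ≤ x - γ)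
    (hinf : {m | m ∉ Set.range φ}.Infinite) (N : ℕ) :
    ∃ n, N ≤ n ∧ EE b c x φ n ≤ 0 := by
  by_contra h
  push_neg at h
  exact allb (c := c) hγ hmodγ hinf N (fun n hn => h n hn)

lemma kC_unbounded (hγ : 0 < γ) (hmodγ : ∀ i, b (φ i) ≤ x - γ)
    (hinf : {m | m ∉ Set.range φ}.Infinite) :
    ∀ k, ∃ n, k < kC b c x φ n := by
  by_contra h
  obtain ⟨N₀, hN₀⟩ := mono_bdd_const (kC_mono (b := b) (c := c) (x := x) (φ := φ)) h
  refine allb (c := c) hγ hmodγ hinf N₀ (fun n hn => ?_)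
  by_contra hc
  push_neg at hc
  have h1 : Cond1 b c x φ n := cond1_iff.mpr hc
  obtain ⟨a1, _, _⟩ := st_succ_c h1
  have := hN₀ n hn
  have := hN₀ (n+1) (le_trans hn (Nat.le_succ n))
  omega

/-- there are b-steps beyond any point -/
lemma bstep_exists (htop : Tendsto c atTop atTop) (N : ℕ) :
    ∃ n, N ≤ n ∧ ¬ Cond1 b c x φ n := by
  by_contra h
  push_neg at h
  -- all steps from N are c-steps
  have hkstep : ∀ m : ℕ, kC b c x φ (N + m) = kC b c x φ N + m := by
    intro m
    induction m with
    | zero => rfl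
    | succ m ih =>
      have h1 := h (N + m) (Nat.le_add_right _ _)
      obtain ⟨a1, _, _⟩ := st_succ_c h1
      have h2 : N + (m+1) = (N + m) + 1 := by omega
      rw [h2, a1, ih]
      omega
  obtain ⟨K₂, hK₂⟩ := eventually_atTop.mp (htop.eventually_ge_atTop (x + 1))
  have hE : ∀ t : ℕ, EE b c x φ (N + (K₂ + t)) ≥ EE b c x φ (N + K₂) + t := by
    intro t
    induction t with
    | zero => simp
    | succ t ih =>
      have h1 := h (N + (K₂ + t)) (Nat.le_add_right _ _)
      have he := EE_succ_c h1
      have hk : kC b c x φ (N + (K₂ + t)) = kC b c x φ N + (K₂ + t) := hkstep (K₂ + t)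
      have hc1 : x + 1 ≤ c (kC b c x φ (N + (K₂ + t))) := by
        apply hK₂
        omega
      have h2 : N + (K₂ + (t + 1)) = (N + (K₂ + t)) + 1 := by omega
      rw [h2, he]
      push_cast
      linarith
  obtain ⟨t, ht⟩ := exists_nat_gt (- EE b c x φ (N + K₂))
  have h1 := h (N + (K₂ + t)) (Nat.le_add_right _ _)
  have h2 := cond1_iff.mp h1
  have h3 := hE t
  linarith

end Dyn

section Dyn2
variable {b c : ℕ → ℝ} {x γ K : ℝ} {φ : ℕ → ℕ}

lemma mono_eventually_ge {f : ℕ → ℕ} (hmono : Monotone f) (hub : ∀ k, ∃ n, k < f n) (k : ℕ) :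
    ∃ N, ∀ n, N ≤ n → k ≤ f n := by
  obtain ⟨n₀, hn₀⟩ := hub k
  exact ⟨n₀, fun n hn => le_trans hn₀.le (hmono hn)⟩

lemma iM_unbounded (htop : Tendsto c atTop atTop) :
    ∀ k, ∃ n, k < iM b c x φ n := by
  by_contra h
  push_neg at h
  obtain ⟨k₀, hk₀⟩ := h
  have hjbd : ¬ ∀ k, ∃ n, k < jR b c x φ n := by
    push_neg
    exact ⟨k₀, fun n => le_trans (jR_le_iM n) (hk₀ n)⟩
  have hibd : ¬ ∀ k, ∃ n, k < iM b c x φ n := by push_neg; exact ⟨k₀, hk₀⟩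
  obtain ⟨N₁, hN₁⟩ := mono_bdd_const (iM_mono (b := b) (c := c) (x := x) (φ := φ)) hibd
  obtain ⟨N₂, hN₂⟩ := mono_bdd_const (jR_mono (b := b) (c := c) (x := x) (φ := φ)) hjbd
  obtain ⟨n, hn, hnc⟩ := bstep_exists (b := b) (x := x) (φ := φ) htop (max N₁ N₂)
  have hn1 : N₁ ≤ n := le_trans (le_max_left _ _) hn
  have hn2 : N₂ ≤ n := le_trans (le_max_right _ _) hn
  refine step_split b c x φ n False ?_ ?_ ?_
  · intro h1 _ _ _; exact hnc h1
  · intro _ _ _ _ a3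
    have e1 := hN₂ n hn2
    have e2 := hN₂ (n+1) (by omega)
    omega
  · intro _ _ _ a2 _
    have e1 := hN₁ n hn1
    have e2 := hN₁ (n+1) (by omega)
    omega

lemma jR_unbounded (htop : Tendsto c atTop atTop) :
    ∀ k, ∃ n, k < jR b c x φ n := by
  by_contra h
  push_neg at h
  have hjbd : ¬ ∀ k, ∃ n, k < jR b c x φ n := by push_neg; exact h
  obtain ⟨N₁, hN₁⟩ := mono_bdd_const (jR_mono (b := b) (c := c) (x := x) (φ := φ)) hjbd
  set jI := jR b c x φ N₁ with hjI
  obtain ⟨n₁, hn₁⟩ := iM_unbounded (b := b) (x := x) (φ := φ) htop jI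
  obtain ⟨T, hT⟩ := exists_nat_ge (2 ^ (psi φ jI + 1) * (|b (psi φ jI)| + |x| + 1))
  obtain ⟨n, hn, hnc⟩ := bstep_exists (b := b) (x := x) (φ := φ) htop (max (max N₁ n₁) T)
  have hnN₁ : N₁ ≤ n := le_trans (le_trans (le_max_left _ _) (le_max_left _ _)) hn
  have hnn₁ : n₁ ≤ n := le_trans (le_trans (le_max_right _ _) (le_max_left _ _)) hn
  have hnT : T ≤ n := le_trans (le_max_right _ _) hn
  have hfr : jR b c x φ n = jI := hN₁ n hnN₁
  have hfr' : jR b c x φ (n+1) = jI := hN₁ (n+1) (by omega)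
  have hcond2 : Cond2 b c x φ n := by
    constructor
    · rw [hfr]
      exact lt_of_lt_of_le hn₁ (iM_mono hnn₁)
    · rw [hfr]
      refine le_trans hT ?_
      exact_mod_cast Nat.cast_le.mpr hnT
  obtain ⟨_, _, a3⟩ := st_succ_r hnc hcond2
  omega

end Dyn2

section Conv
variable {b c : ℕ → ℝ} {x γ K : ℝ} {φ : ℕ → ℕ}

lemma upper (hγ : 0 < γ) (hmodγ : ∀ i, b (φ i) ≤ x - γ)
    (hinf : {m | m ∉ Set.range φ}.Infinite)
    (hmodK : ∀ i, |b (φ i)| ≤ K) (hK : 0 ≤ K)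
    (hpos : ∀ n, 0 < c n) (htop : Tendsto c atTop atTop)
    (hbal : Tendsto (fun n => c n / ∑ i ∈ range n, c i) atTop (𝓝 0))
    {ε : ℝ} (hε : 0 < ε) :
    ∃ N, ∀ n, N ≤ n → EE b c x φ n ≤ ε * n := by
  obtain ⟨Cx, hCx, hCxpos⟩ : ∃ Cx : ℝ, Cx = |x| + K + 1 ∧ 0 < Cx := ⟨_, rfl, by positivity⟩
  obtain ⟨ε', hε', hε'pos⟩ : ∃ e : ℝ, e = ε / (4 * Cx) ∧ 0 < e :=
    ⟨_, rfl, by rw [hCx]; positivity⟩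
  have hball : ∀ᶠ k in atTop, c k / ∑ i ∈ range k, c i < ε' :=
    hbal.eventually (gt_mem_nhds hε'pos)
  obtain ⟨K₁', hK₁'⟩ := eventually_atTop.mp hball
  set K₁ := max K₁' 1 with hK₁def
  have hc_sum : ∀ k, K₁ ≤ k → c k ≤ ε' * sumC c k := by
    intro k hk
    have hk1 : 1 ≤ k := le_trans (le_max_right _ _) hk
    have hspos : 0 < sumC c k := by
      apply Finset.sum_pos (fun i _ => hpos i)
      rw [Finset.nonempty_range_iff]
      omega
    have h2 := hK₁' k (le_trans (le_max_left _ _) hk)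
    rw [div_lt_iff₀ (show (0:ℝ) < ∑ i ∈ range k, c i from hspos)] at h2
    exact h2.le
  obtain ⟨j₀, hj₀⟩ := exists_inv_pow_le (show (0:ℝ) < ε/2 by linarith)
  obtain ⟨Na, hNa⟩ := mono_eventually_ge (kC_mono (b := b) (c := c) (x := x) (φ := φ))
    (kC_unbounded hγ hmodγ hinf) K₁
  obtain ⟨Nb, hNb⟩ := mono_eventually_ge (jR_mono (b := b) (c := c) (x := x) (φ := φ))
    (jR_unbounded htop) j₀
  obtain ⟨Nc, hNc⟩ := exists_nat_ge (4 * |x| / ε)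
  set N := max (max Na Nb) Nc with hNdef
  have hxbound : ∀ n : ℕ, N ≤ n → |x| ≤ (ε/4) * n := by
    intro n hn
    have h1 : (Nc:ℝ) ≤ n := Nat.cast_le.mpr (le_trans (le_max_right _ _) hn)
    have h2 : 4 * |x| / ε ≤ (n:ℝ) := le_trans hNc h1
    rw [div_le_iff₀ hε] at h2
    nlinarith
  have cstep : ∀ n, N ≤ n → Cond1 b c x φ n → EE b c x φ (n+1) ≤ (ε/2) * n := by
    intro n hn h1
    have he := EE_succ_c h1
    have hE0 : EE b c x φ n ≤ 0 := cond1_iff.mp h1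
    have hkn : K₁ ≤ kC b c x φ n := hNa n (le_trans (le_trans (le_max_left _ _) (le_max_left _ _)) hn)
    have hc1 : c (kC b c x φ n) ≤ ε' * sumC c (kC b c x φ n) := hc_sum _ hkn
    have hc2 : sumC c (kC b c x φ n) ≤ Cx * n := by
      rw [hCx]; exact sumC_le hinf hmodK hK h1
    have hc3 : ε' * sumC c (kC b c x φ n) ≤ ε' * (Cx * n) :=
      mul_le_mul_of_nonneg_left hc2 hε'pos.le
    have hc4 : ε' * (Cx * n) = (ε/4) * n := by
      rw [hε']
      have : Cx ≠ 0 := ne_of_gt hCxpos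
      field_simp
    have hx1 : |x| ≤ (ε/4) * n := hxbound n hn
    have hx2 : -x ≤ |x| := neg_le_abs x
    have hc5 : c (kC b c x φ n) ≤ (ε/4) * n := by linarith
    rw [he]
    linarith
  obtain ⟨n₁, hn₁N, hn₁E⟩ := EE_nonpos_exists hγ hmodγ hinf N
  have hinv : ∀ n, n₁ ≤ n → EE b c x φ n ≤ (ε/2) * n +
      n * ∑ t ∈ Finset.Ico (jR b c x φ n₁) (jR b c x φ n), ((2:ℝ) ^ (t+1))⁻¹ := by
    intro n hn
    induction n, hn using Nat.le_induction with
    | base =>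
      rw [Finset.Ico_self, Finset.sum_empty]
      have : (0:ℝ) ≤ (n₁:ℝ) := Nat.cast_nonneg n₁
      nlinarith
    | succ n hn ih =>
      have hβnn : (0:ℝ) ≤ ∑ t ∈ Finset.Ico (jR b c x φ n₁) (jR b c x φ n), ((2:ℝ)^(t+1))⁻¹ :=
        Finset.sum_nonneg fun t _ => by positivity
      have hβnn1 : (0:ℝ) ≤ ∑ t ∈ Finset.Ico (jR b c x φ n₁) (jR b c x φ (n+1)), ((2:ℝ)^(t+1))⁻¹ :=
        Finset.sum_nonneg fun t _ => by positivity
      have hnn : (0:ℝ) ≤ (n:ℝ) := Nat.cast_nonneg n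
      refine step_split b c x φ n _ ?_ ?_ ?_
      · intro h1 _ _ a3
        have := cstep n (le_trans hn₁N hn) h1
        have hjm : jR b c x φ n₁ ≤ jR b c x φ (n+1) := jR_mono (by omega)
        push_cast
        nlinarith
      · intro h1 h2 a1 a2 a3
        have he := EE_succ_r h1 h2
        have hb1 := elig_bound (b := b) (x := x) hinf h2.2
        have hinv2 : (0:ℝ) ≤ ((2:ℝ) ^ (jR b c x φ n + 1))⁻¹ := by positivity
        have habs : b (psi φ (jR b c x φ n)) - x ≤ (n:ℝ) * ((2:ℝ) ^ (jR b c x φ n + 1))⁻¹ := by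
          have t1 : b (psi φ (jR b c x φ n)) ≤ |b (psi φ (jR b c x φ n))| := le_abs_self _
          have t2 : -x ≤ |x| := neg_le_abs x
          linarith
        have hmono' : jR b c x φ n₁ ≤ jR b c x φ n := jR_mono hn
        rw [he, a3, Finset.sum_Ico_succ_top hmono']
        push_cast
        nlinarith [ih, habs, hβnn, hinv2, hnn]
      · intro h1 h2 a1 a2 a3
        have he := EE_succ_m h1 h2
        have hbb := hmodγ (iM b c x φ n)
        rw [he, a3]
        push_cast
        nlinarith [ih, hβnn, hnn, hγ]
  refine ⟨n₁, fun n hn => ?_⟩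
  have h1 := hinv n hn
  have hj : j₀ ≤ jR b c x φ n₁ :=
    hNb n₁ (le_trans (le_trans (le_max_right _ _) (le_max_left _ _)) hn₁N)
  have h2 : ∑ t ∈ Finset.Ico (jR b c x φ n₁) (jR b c x φ n), ((2:ℝ) ^ (t+1))⁻¹ ≤ ε/2 :=
    le_trans (gsum_Ico (jR_mono hn)) (le_trans (two_pow_anti hj) hj₀)
  have h3 : (n:ℝ) * ∑ t ∈ Finset.Ico (jR b c x φ n₁) (jR b c x φ n), ((2:ℝ) ^ (t+1))⁻¹
      ≤ (n:ℝ) * (ε/2) := mul_le_mul_of_nonneg_left h2 (Nat.cast_nonneg n)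
  linarith

lemma lower (hγ : 0 < γ) (hmodγ : ∀ i, b (φ i) ≤ x - γ)
    (hinf : {m | m ∉ Set.range φ}.Infinite)
    (hmodK : ∀ i, |b (φ i)| ≤ K)
    (htop : Tendsto c atTop atTop)
    {ε : ℝ} (hε : 0 < ε) :
    ∃ N, ∀ n, N ≤ n → -(ε * n) ≤ EE b c x φ n := by
  obtain ⟨K₂, hK₂⟩ := eventually_atTop.mp (htop.eventually_ge_atTop (x + 1))
  obtain ⟨Na, hNa⟩ := mono_eventually_ge (kC_mono (b := b) (c := c) (x := x) (φ := φ))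
    (kC_unbounded hγ hmodγ hinf) K₂
  obtain ⟨j₀, hj₀⟩ := exists_inv_pow_le hε
  obtain ⟨Nb, hNb⟩ := mono_eventually_ge (jR_mono (b := b) (c := c) (x := x) (φ := φ))
    (jR_unbounded htop) j₀
  obtain ⟨Nc, hNc⟩ := exists_nat_ge ((K + |x|) / ε)
  set N := max (max Na Nb) Nc with hNdef
  have hKx : ∀ n : ℕ, N ≤ n → K + |x| ≤ ε * n := by
    intro n hn
    have h1 : (Nc:ℝ) ≤ n := Nat.cast_le.mpr (le_trans (le_max_right _ _) hn)
    have h2 : (K + |x|) / ε ≤ (n:ℝ) := le_trans hNc h1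
    rw [div_le_iff₀ hε] at h2
    linarith [mul_comm ε (n:ℝ)]
  obtain ⟨n₂, hn₂N, hn₂c⟩ := bstep_exists (b := b) (x := x) (φ := φ) htop N
  have hbase : 0 < EE b c x φ n₂ := lt_of_not_ge (fun hc => hn₂c (cond1_iff.mpr hc))
  refine ⟨n₂, fun n hn => ?_⟩
  induction n, hn using Nat.le_induction with
  | base =>
    have : (0:ℝ) ≤ ε * n₂ := by positivity
    linarith
  | succ n hn ih =>
    have hnN : N ≤ n := le_trans hn₂N hn
    have hnn : (0:ℝ) ≤ (n:ℝ) := Nat.cast_nonneg n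
    have hεn : -(ε * ((n:ℕ):ℝ)) ≥ -(ε * (((n+1):ℕ):ℝ)) := by push_cast; nlinarith
    by_cases h1 : Cond1 b c x φ n
    · have he := EE_succ_c h1
      have hkn : K₂ ≤ kC b c x φ n := hNa n (le_trans (le_trans (le_max_left _ _) (le_max_left _ _)) hnN)
      have hc1 : x + 1 ≤ c (kC b c x φ n) := hK₂ _ hkn
      rw [he]
      push_cast
      push_cast at ih
      linarith
    · have hEpos : 0 < EE b c x φ n := lt_of_not_ge (fun hc => h1 (cond1_iff.mpr hc))
      by_cases h2 : Cond2 b c x φ n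
      · have he := EE_succ_r h1 h2
        have hb1 := elig_bound (b := b) (x := x) hinf h2.2
        have hj : j₀ ≤ jR b c x φ n := hNb n (le_trans (le_trans (le_max_right _ _) (le_max_left _ _)) hnN)
        have hj2 : ((2:ℝ) ^ (jR b c x φ n + 1))⁻¹ ≤ ((2:ℝ) ^ j₀)⁻¹ := two_pow_anti (by omega)
        have hb2 : (n:ℝ) * ((2:ℝ) ^ (jR b c x φ n + 1))⁻¹ ≤ (n:ℝ) * ((2:ℝ) ^ j₀)⁻¹ :=
          mul_le_mul_of_nonneg_left hj2 hnn
        have hb3 : (n:ℝ) * ((2:ℝ) ^ j₀)⁻¹ ≤ (n:ℝ) * ε := mul_le_mul_of_nonneg_left hj₀ hnn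
        have t1 : -|b (psi φ (jR b c x φ n))| ≤ b (psi φ (jR b c x φ n)) := neg_abs_le _
        have t2 : x ≤ |x| := le_abs_self x
        rw [he]
        push_cast
        nlinarith
      · have he := EE_succ_m h1 h2
        have hb1 := hmodK (iM b c x φ n)
        have t1 : -K ≤ b (φ (iM b c x φ n)) := by
          have := abs_le.mp hb1
          linarith
        have t2 : x ≤ |x| := le_abs_self x
        have t3 := hKx n hnN
        rw [he]
        push_cast
        linarith

end Conv

section Bij
variable {b c : ℕ → ℝ} {x γ K : ℝ} {φ : ℕ → ℕ}

lemma kC_step_le (n : ℕ) : kC b c x φ (n+1) ≤ kC b c x φ n + 1 := by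
  refine step_split b c x φ n _ ?_ ?_ ?_ <;> intros <;> omega

lemma iM_step_le (n : ℕ) : iM b c x φ (n+1) ≤ iM b c x φ n + 1 := by
  refine step_split b c x φ n _ ?_ ?_ ?_ <;> intros <;> omega

lemma jR_step_le (n : ℕ) : jR b c x φ (n+1) ≤ jR b c x φ n + 1 := by
  refine step_split b c x φ n _ ?_ ?_ ?_ <;> intros <;> omega

lemma pFun_injective (hinf : {m | m ∉ Set.range φ}.Infinite) (hφ : StrictMono φ) :
    Function.Injective (pFun b c x φ) := by
  suffices h : ∀ m n, m < n → pFun b c x φ m ≠ pFun b c x φ n by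
    intro m n heq
    rcases lt_trichotomy m n with hlt | he | hlt
    · exact absurd heq (h m n hlt)
    · exact he
    · exact absurd heq.symm (h n m hlt)
  intro m n hmn heq
  have hccm : ∀ (hm : Cond1 b c x φ m) (hn : Cond1 b c x φ n), False := by
    intro hm hn
    rw [pFun_c hm, pFun_c hn] at heq
    have h1 : kC b c x φ m = kC b c x φ n := by omega
    obtain ⟨a1, _, _⟩ := st_succ_c hm
    have h2 : kC b c x φ (m+1) ≤ kC b c x φ n := kC_mono hmn
    omega
  by_cases hm : Cond1 b c x φ m <;> by_cases hn : Cond1 b c x φ n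
  · exact hccm hm hn
  · -- m is c-step (odd), n is b-step (even)
    rw [pFun_c hm] at heq
    by_cases hn2 : Cond2 b c x φ n
    · rw [pFun_r hn hn2] at heq; omega
    · rw [pFun_m hn hn2] at heq; omega
  · rw [pFun_c hn] at heq
    by_cases hm2 : Cond2 b c x φ m
    · rw [pFun_r hm hm2] at heq; omega
    · rw [pFun_m hm hm2] at heq; omega
  · by_cases hm2 : Cond2 b c x φ m <;> by_cases hn2 : Cond2 b c x φ n
    · rw [pFun_r hm hm2, pFun_r hn hn2] at heq
      have h1 : psi φ (jR b c x φ m) = psi φ (jR b c x φ n) := by omega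
      have h2 : jR b c x φ m = jR b c x φ n := (psi_strictMono hinf).injective h1
      obtain ⟨_, _, a3⟩ := st_succ_r hm hm2
      have h3 : jR b c x φ (m+1) ≤ jR b c x φ n := jR_mono hmn
      omega
    · rw [pFun_r hm hm2, pFun_m hn hn2] at heq
      have h1 : psi φ (jR b c x φ m) = φ (iM b c x φ n) := by omega
      exact psi_not_mem hinf _ ⟨_, h1.symm⟩
    · rw [pFun_m hm hm2, pFun_r hn hn2] at heq
      have h1 : psi φ (jR b c x φ n) = φ (iM b c x φ m) := by omega
      exact psi_not_mem hinf _ ⟨_, h1.symm⟩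
    · rw [pFun_m hm hm2, pFun_m hn hn2] at heq
      have h1 : φ (iM b c x φ m) = φ (iM b c x φ n) := by omega
      have h2 : iM b c x φ m = iM b c x φ n := hφ.injective h1
      obtain ⟨_, a2, _⟩ := st_succ_m hm hm2
      have h3 : iM b c x φ (m+1) ≤ iM b c x φ n := iM_mono hmn
      omega

lemma pFun_surjective (hγ : 0 < γ) (hmodγ : ∀ i, b (φ i) ≤ x - γ)
    (hinf : {m | m ∉ Set.range φ}.Infinite) (htop : Tendsto c atTop atTop) :
    Function.Surjective (pFun b c x φ) := by
  intro y
  rcases Nat.even_or_odd y with ⟨t, ht⟩ | ⟨k, hk⟩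
  · by_cases htr : t ∈ Set.range φ
    · obtain ⟨i, rfl⟩ := htr
      obtain ⟨n, hn1, hn2⟩ := mono_hit (f := iM b c x φ) iM_zero iM_step_le iM_mono
        (iM_unbounded htop) i
      refine ⟨n, ?_⟩
      refine step_split b c x φ n _ ?_ ?_ ?_
      · intro _ _ a2 _; omega
      · intro _ _ _ a2 _; omega
      · intro h1 h2 _ _ _
        rw [pFun_m h1 h2, hn1]
        omega
    · have hmem : t ∈ {m | m ∉ Set.range φ} := htr
      rw [← Nat.range_nth_of_infinite hinf] at hmem
      obtain ⟨j, hj⟩ := hmem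
      obtain ⟨n, hn1, hn2⟩ := mono_hit (f := jR b c x φ) jR_zero jR_step_le jR_mono
        (jR_unbounded htop) j
      refine ⟨n, ?_⟩
      refine step_split b c x φ n _ ?_ ?_ ?_
      · intro _ _ _ a3; omega
      · intro h1 h2 _ _ _
        rw [pFun_r h1 h2, hn1]
        unfold psi
        rw [hj]
        omega
      · intro _ _ _ _ a3; omega
  · obtain ⟨n, hn1, hn2⟩ := mono_hit (f := kC b c x φ) kC_zero kC_step_le kC_mono
      (kC_unbounded hγ hmodγ hinf) k
    refine ⟨n, ?_⟩
    refine step_split b c x φ n _ ?_ ?_ ?_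
    · intro h1 _ _ _
      rw [pFun_c h1, hn1]
      omega
    · intro _ _ a1 _ _; omega
    · intro _ _ a1 _ _; omega

end Bij

section Final
variable {b c : ℕ → ℝ} {x γ K : ℝ} {φ : ℕ → ℕ}

lemma avg_tendsto (hγ : 0 < γ) (hmodγ : ∀ i, b (φ i) ≤ x - γ)
    (hinf : {m | m ∉ Set.range φ}.Infinite)
    (hmodK : ∀ i, |b (φ i)| ≤ K) (hK : 0 ≤ K)
    (hpos : ∀ n, 0 < c n) (htop : Tendsto c atTop atTop)
    (hbal : Tendsto (fun n => c n / ∑ i ∈ range n, c i) atTop (𝓝 0)) :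
    Tendsto (fun n => avgSeq (fun i => interleave b c (pFun b c x φ i)) n) atTop (𝓝 x) := by
  rw [Metric.tendsto_atTop]
  intro ε hε
  have hε2 : 0 < ε/2 := by linarith
  obtain ⟨N₁, h₁⟩ := upper hγ hmodγ hinf hmodK hK hpos htop hbal hε2
  obtain ⟨N₂, h₂⟩ := lower (K := K) hγ hmodγ hinf hmodK htop hε2
  refine ⟨max (max N₁ N₂) 1, fun n hn => ?_⟩
  have hn1 : 1 ≤ n := le_trans (le_max_right _ _) hn
  have hnN₁ : N₁ ≤ n := le_trans (le_trans (le_max_left _ _) (le_max_left _ _)) hn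
  have hnN₂ : N₂ ≤ n := le_trans (le_trans (le_max_right _ _) (le_max_left _ _)) hn
  have hnpos : (0:ℝ) < n := by exact_mod_cast hn1
  have havg : avgSeq (fun i => interleave b c (pFun b c x φ i)) n - x = EE b c x φ n / n := by
    unfold avgSeq
    rw [EE_eq_sum, eq_div_iff (ne_of_gt hnpos)]
    field_simp
  rw [Real.dist_eq, havg]
  have hub := h₁ n hnN₁
  have hlb := h₂ n hnN₂
  have habs : |EE b c x φ n| ≤ (ε/2) * n := abs_le.mpr ⟨by linarith, hub⟩
  have h3 : |EE b c x φ n / n| = |EE b c x φ n| / n := by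
    rw [abs_div, abs_of_pos hnpos]
  rw [h3]
  have h4 : |EE b c x φ n| / n ≤ ((ε/2) * n) / n :=
    div_le_div_of_nonneg_right habs hnpos.le |>.trans_eq rfl
  have h5 : ((ε/2) * n) / n = ε/2 := by field_simp
  linarith

end Final

end S17

/-- For `(a_n) = (b_n)||(c_n)` with `limsup bₙ = b ∈ ℝ`, `c_n > 0`, `c_n → +∞`
and `cₙ / (c₁ + ⋯ + c₍ₙ₋₁₎) → 0`: every real `x > b` is accessible in average
by rearrangement of `(a_n)`. -/
theorem stmt17 (b c : ℕ → ℝ) (B : ℝ)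
    (hb : limsup (fun n => ((b n : ℝ) : EReal)) atTop = (B : EReal))
    (hpos : ∀ n, 0 < c n) (htop : Tendsto c atTop atTop)
    (hbal : Tendsto (fun n => c n / ∑ i ∈ Finset.range n, c i) atTop (𝓝 0)) :
    ∀ x : ℝ, B < x → (x : EReal) ∈ AAR (interleave b c) := by
  intro x hx
  obtain ⟨γ, hγdef, hγ⟩ : ∃ γ : ℝ, γ = (x - B)/2 ∧ 0 < γ := ⟨_, rfl, by linarith⟩
  have hev : ∀ᶠ n in atTop, b n < B + γ := by
    have h1 : limsup (fun n => ((b n : ℝ) : EReal)) atTop < ((B + γ : ℝ) : EReal) := by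
      rw [hb]
      exact_mod_cast (show B < B + γ by linarith)
    have h2 := eventually_lt_of_limsup_lt h1
    filter_upwards [h2] with n hn
    exact_mod_cast hn
  have hfr : ∃ᶠ n in atTop, B - 1 < b n := by
    have h1 : ((B - 1 : ℝ) : EReal) < limsup (fun n => ((b n : ℝ) : EReal)) atTop := by
      rw [hb]
      exact_mod_cast (show B - 1 < B by linarith)
    have h2 := frequently_lt_of_lt_limsup (h := h1)
    apply h2.mono
    intro n hn
    exact_mod_cast hn
  have hfe : ∃ᶠ n in atTop, (B - 1 < b n ∧ b n < B + γ) := hfr.and_eventually hev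
  obtain ⟨φ₀, hφ₀mono, hφ₀⟩ := extraction_of_frequently_atTop hfe
  obtain ⟨φ, hφdef⟩ : ∃ φ : ℕ → ℕ, φ = fun i => φ₀ (2 * i) := ⟨_, rfl⟩
  have hφ : StrictMono φ := by
    intro i j h
    rw [hφdef]
    exact hφ₀mono (by omega)
  have hinf : {m | m ∉ Set.range φ}.Infinite := by
    apply Set.infinite_of_injective_forall_mem (f := fun i : ℕ => φ₀ (2 * i + 1))
    · intro i j h
      have := hφ₀mono.injective h
      omega
    · intro i
      simp only [Set.mem_setOf_eq]
      rintro ⟨j, hj⟩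
      rw [hφdef] at hj
      have := hφ₀mono.injective hj
      omega
  obtain ⟨K, hKdef, hK⟩ : ∃ K : ℝ, K = |B| + γ + 1 ∧ 0 ≤ K := ⟨_, rfl, by positivity⟩
  have hmods : ∀ i, B - 1 < b (φ i) ∧ b (φ i) < B + γ := by
    intro i
    rw [hφdef]
    exact hφ₀ (2 * i)
  have hmodK : ∀ i, |b (φ i)| ≤ K := by
    intro i
    obtain ⟨u1, u2⟩ := hmods i
    rw [hKdef]
    rw [abs_le]
    constructor
    · linarith [neg_abs_le B]
    · linarith [le_abs_self B]
  have hmodγ : ∀ i, b (φ i) ≤ x - γ := by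
    intro i
    obtain ⟨_, u2⟩ := hmods i
    have : B + γ = x - γ := by rw [hγdef]; ring
    linarith
  refine ⟨S17.pFun b c x φ,
    ⟨S17.pFun_injective hinf hφ, S17.pFun_surjective hγ hmodγ hinf htop⟩, ?_⟩
  unfold avgTendsTo
  rw [EReal.tendsto_coe]
  exact S17.avg_tendsto hγ hmodγ hinf hmodK hK hpos htop hbal
end
end

section
/- Let (a_n) be a real sequence that is bounded from below or bounded from above, let p : ℕ → ℕ be a bijection, and let c_n = (a_{p(1)} + ⋯ + a_{p(n)})/n be the arithmetic means of the rearranged sequence. Then the set of accumulation points (cluster points) of (c_n) in ℝ̄ is exactly the extended-real closed interval [liminf_{n→∞} c_n, limsup_{n→∞} c_n]. -/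
open Filter Topology

lemma avg_mul (b : ℕ → ℝ) (n : ℕ) : (n : ℝ) * avgSeq b n = ∑ i ∈ Finset.range n, b i := by
  cases n with
  | zero => simp [avgSeq]
  | succ k =>
      rw [avgSeq, mul_div_cancel₀]
      positivity

lemma avg_succ (b : ℕ → ℝ) (n : ℕ) :
    avgSeq b (n + 1) = ((n : ℝ) * avgSeq b n + b n) / (n + 1) := by
  rw [avgSeq, Finset.sum_range_succ, avg_mul]
  push_cast; ring_nf

lemma avg_neg (b : ℕ → ℝ) (n : ℕ) : avgSeq (fun k => -b k) n = - avgSeq b n := by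
  simp [avgSeq, neg_div]

lemma crossing (b : ℕ → ℝ) (m x : ℝ) (hm : ∀ n, m ≤ b n)
    (h1 : ∃ᶠ n in atTop, avgSeq b n < x) (h2 : ∃ᶠ n in atTop, x ≤ avgSeq b n) :
    MapClusterPt x atTop (avgSeq b) := by
  set c := avgSeq b with hc
  rw [Metric.nhds_basis_ball.mapClusterPt_iff_frequently]
  intro ε hε
  have hmx : m < x := by
    obtain ⟨n, hn1, hnlt⟩ := (frequently_atTop.mp h1) 1
    have hnpos : (0:ℝ) < n := by exact_mod_cast hn1
    have hsum : (n:ℝ) * m ≤ ∑ i ∈ Finset.range n, b i := by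
      calc (n:ℝ) * m = ∑ _i ∈ Finset.range n, m := by
            rw [Finset.sum_const, Finset.card_range, nsmul_eq_mul]
        _ ≤ _ := Finset.sum_le_sum fun i _ => hm i
    have hmc : m ≤ c n := by
      rw [hc, avgSeq, le_div_iff₀ hnpos]; linarith
    linarith
  obtain ⟨N, hN⟩ := exists_nat_gt ((x - m) / ε)
  rw [frequently_atTop]
  intro N0
  obtain ⟨n0, hn0ge, hn0⟩ := (frequently_atTop.mp h2) (max N N0)
  have hne : ∃ k, c (n0 + 1 + k) < x := by
    obtain ⟨j, hjge, hj⟩ := (frequently_atTop.mp h1) (n0 + 1)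
    exact ⟨j - (n0 + 1), by rwa [Nat.add_sub_cancel' hjge]⟩
  set K := Nat.find hne with hK
  set n := n0 + K with hn
  have hcn : x ≤ c n := by
    rcases Nat.eq_zero_or_pos K with h0 | hpos
    · rw [hn, h0]; exact hn0
    · have hmin := Nat.find_min hne (m := K - 1) (by omega)
      have he : n0 + 1 + (K - 1) = n := by omega
      rw [he] at hmin
      exact not_lt.mp hmin
  have hcn1 : c (n + 1) < x := by
    have hspec := Nat.find_spec hne
    have he : n0 + 1 + K = n + 1 := by omega
    rwa [he] at hspec
  refine ⟨n + 1, by omega, ?_⟩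
  have hnN : (N : ℝ) ≤ (n : ℝ) + 1 := by
    have : N ≤ n + 1 := le_trans (le_max_left N N0) (by omega)
    exact_mod_cast this
  have hxm : x - m < ε * ((n:ℝ) + 1) := by
    have h1' : (x - m) / ε < (N:ℝ) := hN
    rw [div_lt_iff₀ hε] at h1'
    nlinarith
  have hlow : x - ε < c (n + 1) := by
    have hpos : (0:ℝ) < (n:ℝ) + 1 := by positivity
    rw [hc, avg_succ, lt_div_iff₀ hpos]
    have hcast : (0:ℝ) ≤ (n:ℝ) := Nat.cast_nonneg n
    nlinarith [hm n, mul_nonneg hcast (sub_nonneg.mpr hcn)]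
  rw [Metric.mem_ball, Real.dist_eq, abs_sub_lt_iff]
  constructor <;> linarith

lemma limsup_clusterPt (C : ℕ → EReal) : MapClusterPt (limsup C atTop) atTop C := by
  by_cases hbot : limsup C atTop = ⊥
  · rw [hbot]
    have htd : Tendsto C atTop (𝓝 (⊥ : EReal)) := by
      rw [EReal.tendsto_nhds_bot_iff_real]
      intro y
      exact eventually_lt_of_limsup_lt (hbot ▸ EReal.bot_lt_coe y)
    exact htd.mapClusterPt
  by_cases htop : limsup C atTop = ⊤
  · rw [htop, mapClusterPt_iff_frequently]
    intro s hs
    obtain ⟨y, hy⟩ := EReal.mem_nhds_top_iff.mp hs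
    have hfreq : ∃ᶠ n in atTop, (y : EReal) < C n :=
      frequently_lt_of_lt_limsup (by isBoundedDefault) (htop ▸ EReal.coe_lt_top y)
    exact hfreq.mono fun n hn => hy hn
  · set r := (limsup C atTop).toReal with hr
    have hrc : limsup C atTop = (r : EReal) := (EReal.coe_toReal htop hbot).symm
    rw [hrc, mapClusterPt_iff_frequently]
    intro s hs
    rw [EReal.nhds_coe, mem_map] at hs
    obtain ⟨ε, hε, hball⟩ := Metric.mem_nhds_iff.mp hs
    have h1 : ∀ᶠ n in atTop, C n < ((r + ε : ℝ) : EReal) :=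
      eventually_lt_of_limsup_lt (by rw [hrc]; exact_mod_cast (by linarith : r < r + ε))
    have h2 : ∃ᶠ n in atTop, ((r - ε : ℝ) : EReal) < C n :=
      frequently_lt_of_lt_limsup (by isBoundedDefault) (by rw [hrc]; exact_mod_cast (by linarith : r - ε < r))
    refine (h2.and_eventually h1).mono fun n ⟨hl, hu⟩ => ?_
    have hnb : C n ≠ ⊥ := fun h => by simp [h] at hl
    have hnt : C n ≠ ⊤ := fun h => by simp [h] at hu
    set y := (C n).toReal with hy'
    have hcy : C n = (y : EReal) := (EReal.coe_toReal hnt hnb).symm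
    rw [hcy] at hl hu ⊢
    have hl' : r - ε < y := by exact_mod_cast hl
    have hu' : y < r + ε := by exact_mod_cast hu
    apply hball
    rw [Metric.mem_ball, Real.dist_eq, abs_sub_lt_iff]
    constructor <;> linarith

lemma liminf_clusterPt (C : ℕ → EReal) : MapClusterPt (liminf C atTop) atTop C := by
  have h := limsup_clusterPt (fun n => - C n)
  have hcomp := h.tendsto_comp (f := fun z : EReal => -z)
    (y := - limsup (fun n => - C n) atTop) (continuous_neg.tendsto _)
  have heq : liminf C atTop = - limsup (fun n => - C n) atTop := by
    rw [show (fun n => - C n) = - C from rfl, EReal.limsup_neg, neg_neg]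
  rw [heq]
  have hfun : (fun z : EReal => -z) ∘ (fun n => - C n) = C := by
    funext n; simp
  rwa [hfun] at hcomp

/-- For a real sequence bounded from below or above and any rearrangement of it,
the set of accumulation points in `ℝ̄` of the sequence of arithmetic means of
the rearrangement is exactly `[liminf cₙ, limsup cₙ]`. -/
theorem stmt19 (a : ℕ → ℝ)
    (hbd : BddBelow (Set.range a) ∨ BddAbove (Set.range a))
    (p : ℕ → ℕ) (hp : Function.Bijective p) :
    {α : EReal | ∃ φ : ℕ → ℕ, StrictMono φ ∧
        Tendsto (fun k => ((avgSeq (fun n => a (p n)) (φ k) : ℝ) : EReal))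
          atTop (𝓝 α)} =
      Set.Icc
        (liminf (fun n => ((avgSeq (fun n => a (p n)) n : ℝ) : EReal)) atTop)
        (limsup (fun n => ((avgSeq (fun n => a (p n)) n : ℝ) : EReal)) atTop) := by
  set b : ℕ → ℝ := fun n => a (p n) with hb
  set C : ℕ → EReal := fun n => ((avgSeq b n : ℝ) : EReal) with hC
  ext α
  simp only [Set.mem_setOf_eq, Set.mem_Icc]
  constructor
  · rintro ⟨φ, hφ, hlim⟩
    have hlim' : Tendsto (C ∘ φ) atTop (𝓝 α) := hlim
    constructor
    · have h1 : liminf C atTop ≤ liminf (C ∘ φ) atTop :=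
        liminf_le_liminf_of_le hφ.tendsto_atTop
      rwa [hlim'.liminf_eq] at h1
    · have h2 : limsup (C ∘ φ) atTop ≤ limsup C atTop :=
        limsup_le_limsup_of_le hφ.tendsto_atTop
      rwa [hlim'.limsup_eq] at h2
  · rintro ⟨hL, hU⟩
    rcases eq_or_lt_of_le hU with heq | hU'
    · obtain ⟨ψ, hψ, ht⟩ :=
        TopologicalSpace.FirstCountableTopology.tendsto_subseq (limsup_clusterPt C)
      exact ⟨ψ, hψ, heq ▸ ht⟩
    rcases eq_or_lt_of_le hL with heq | hL'
    · obtain ⟨ψ, hψ, ht⟩ :=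
        TopologicalSpace.FirstCountableTopology.tendsto_subseq (liminf_clusterPt C)
      exact ⟨ψ, hψ, heq ▸ ht⟩
    · have hbot : (⊥ : EReal) < α := lt_of_le_of_lt bot_le hL'
      have htop : α < ⊤ := lt_of_lt_of_le hU' le_top
      set x := α.toReal with hx
      have hα : α = (x : EReal) := (EReal.coe_toReal htop.ne hbot.ne').symm
      have hf1 : ∃ᶠ n in atTop, avgSeq b n < x := by
        have h := frequently_lt_of_liminf_lt (by isBoundedDefault) (hα ▸ hL')
        exact h.mono fun n hn => by
          simp only [hC] at hn; exact_mod_cast hn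
      have hf2 : ∃ᶠ n in atTop, x < avgSeq b n := by
        have h := frequently_lt_of_lt_limsup (by isBoundedDefault) (hα ▸ hU')
        exact h.mono fun n hn => by
          simp only [hC] at hn; exact_mod_cast hn
      rcases hbd with ⟨m, hmlb⟩ | ⟨M, hMub⟩
      · have hmb : ∀ n, m ≤ b n := fun n => hmlb (Set.mem_range_self (p n))
        have hmc := crossing b m x hmb hf1 (hf2.mono fun n hn => le_of_lt hn)
        obtain ⟨ψ, hψ, ht⟩ := TopologicalSpace.FirstCountableTopology.tendsto_subseq hmc
        refine ⟨ψ, hψ, ?_⟩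
        rw [hα]
        exact EReal.tendsto_coe.mpr ht
      · have hmb : ∀ n, -M ≤ -(b n) := fun n =>
          neg_le_neg (hMub (Set.mem_range_self (p n)))
        have hf1' : ∃ᶠ n in atTop, avgSeq (fun k => -(b k)) n < -x := by
          refine hf2.mono fun n hn => ?_
          rw [avg_neg]; linarith
        have hf2' : ∃ᶠ n in atTop, -x ≤ avgSeq (fun k => -(b k)) n := by
          refine hf1.mono fun n hn => ?_
          rw [avg_neg]; linarith
        have hmc := crossing (fun k => -(b k)) (-M) (-x) hmb hf1' hf2'
        obtain ⟨ψ, hψ, ht⟩ := TopologicalSpace.FirstCountableTopology.tendsto_subseq hmc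
        refine ⟨ψ, hψ, ?_⟩
        rw [hα]
        have ht' : Tendsto (fun k => avgSeq b (ψ k)) atTop (𝓝 x) := by
          have := ht.neg
          simp only [Function.comp, avg_neg, neg_neg] at this
          simpa using this
        exact EReal.tendsto_coe.mpr ht'
end
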